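/- arXiv:2604.11569 — 8 statements merged into one kernel-verified Lean document; each statement's English description precedes it below -/
import Mathlib

section
/- Let α be a positive real algebraic number whose primitive minimal polynomial has the form 𝔪_α(X) = X^m + p_{m-1}X^{m-1} + ... + p_1 X - c, where all p_i are nonnegative integers, not all zero, and c > 1 is an integer. Then the additive monoid ℕ₀[α] is atomic but not finitely generated. -/
open Polynomial

noncomputable def evalN (α : ℝ) (f : Polynomial ℕ) : ℝ :=
  Polynomial.eval₂ (Nat.castRingHom ℝ) α f

/-- The additive monoid ℕ₀[α] = {f(α) : f ∈ ℕ₀[X]} ⊆ ℝ. -/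
noncomputable def Nmon (α : ℝ) : AddSubmonoid ℝ where
  carrier := Set.range (evalN α)
  zero_mem' := ⟨0, by simp [evalN]⟩
  add_mem' := fun ha hb => by
    obtain ⟨f, rfl⟩ := ha
    obtain ⟨g, rfl⟩ := hb
    exact ⟨f + g, by simp [evalN]⟩

/-- `a` is an atom of ℕ₀[α]. -/
def IsAtomIn (α : ℝ) (a : ℝ) : Prop :=
  a ∈ Nmon α ∧ a ≠ 0 ∧
    ∀ b c : ℝ, b ∈ Nmon α → c ∈ Nmon α → a = b + c → b = 0 ∨ c = 0

/-- ℕ₀[α] is antimatter: it has no atoms. -/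
def Antimatter (α : ℝ) : Prop := ∀ a : ℝ, ¬ IsAtomIn α a

/-- ℕ₀[α] is atomic: every nonzero element is a finite sum of atoms. -/
def AtomicM (α : ℝ) : Prop :=
  ∀ x ∈ Nmon α, x ≠ 0 →
    ∃ s : Multiset ℝ, (∀ a ∈ s, IsAtomIn α a) ∧ s.sum = x

/-- ℕ₀[α] is a unique factorization monoid. -/
def IsUFM (α : ℝ) : Prop :=
  ∀ s t : Multiset ℝ, (∀ a ∈ s, IsAtomIn α a) → (∀ a ∈ t, IsAtomIn α a) →
    s.sum = t.sum → s = t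

/-- ℕ₀[α] is a length-factorial monoid: factorizations of equal length
of the same element coincide. -/
def IsLFM (α : ℝ) : Prop :=
  ∀ s t : Multiset ℝ, (∀ a ∈ s, IsAtomIn α a) → (∀ a ∈ t, IsAtomIn α a) →
    s.sum = t.sum → Multiset.card s = Multiset.card t → s = t

/-- `m` is the primitive integer minimal polynomial of `α`
(with positive leading coefficient). -/
def IsMinPolyZ (α : ℝ) (m : Polynomial ℤ) : Prop :=
  Polynomial.aeval α m = 0 ∧ m.IsPrimitive ∧ 0 < m.leadingCoeff ∧
    ∀ g : Polynomial ℤ, g ≠ 0 → Polynomial.aeval α g = 0 → m.degree ≤ g.degree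



lemma key_aux (m : ℕ) (P : Polynomial ℤ) (c : ℤ) (hc : 1 < c)
    (hmonic : P.Monic) (hdeg : P.natDegree = m)
    (hcoeff : ∀ i, 0 < i → i < m → 0 ≤ P.coeff i)
    (hnz : ∃ i, 0 < i ∧ i < m ∧ P.coeff i ≠ 0)
    (h0 : P.coeff 0 = -c)
    (n : ℕ) (q : Polynomial ℤ)
    (hq : ∀ k, 0 ≤ (X ^ n + q * P).coeff k) : q = 0 := by
  -- coefficients of P at positive indices are nonneg
  have hP1 : ∀ i, 0 < i → 0 ≤ P.coeff i := by
    intro i hi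
    rcases lt_trichotomy i m with h | h | h
    · exact hcoeff i hi h
    · subst h; rw [← hdeg, hmonic.coeff_natDegree]; norm_num
    · rw [Polynomial.coeff_eq_zero_of_natDegree_lt (by omega)]
  have hPm : P.coeff m = 1 := by rw [← hdeg, hmonic.coeff_natDegree]
  -- Step 1: all coefficients of q are ≤ 0
  have hneg : ∀ k, q.coeff k ≤ 0 := by
    intro k
    induction k using Nat.strong_induction_on with
    | _ k ih =>
      have h := hq k
      rw [coeff_add, coeff_mul] at h
      have hk0 : ((k, 0) : ℕ × ℕ) ∈ Finset.HasAntidiagonal.antidiagonal k := by simp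
      rw [← Finset.sum_erase_add _ _ hk0] at h
      have hrest : ∑ x ∈ (Finset.HasAntidiagonal.antidiagonal k).erase (k, 0),
          q.coeff x.1 * P.coeff x.2 ≤ 0 := by
        apply Finset.sum_nonpos
        intro x hx
        have hx1 := Finset.mem_of_mem_erase hx
        rw [Finset.HasAntidiagonal.mem_antidiagonal] at hx1
        have hxne := Finset.ne_of_mem_erase hx
        have hx2pos : 0 < x.2 := by
          by_contra h'
          push_neg at h'
          apply hxne
          have h2 : x.2 = 0 := by omega
          have h1 : x.1 = k := by omega
          exact Prod.ext h1 h2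
        exact mul_nonpos_of_nonpos_of_nonneg (ih x.1 (by omega)) (hP1 x.2 hx2pos)
      have hδ : (X ^ n : Polynomial ℤ).coeff k ≤ 1 := by
        rw [coeff_X_pow]; split <;> norm_num
      rw [h0] at h
      by_contra hpos
      push_neg at hpos
      have h1 : 1 ≤ q.coeff k := hpos
      have h2 : c * 1 ≤ c * q.coeff k := mul_le_mul_of_nonneg_left h1 (by linarith)
      nlinarith
  by_contra hq0
  set d := q.natDegree with hd
  have hqd : q.coeff d ≤ -1 := by
    have h1 := hneg d
    have h2 : q.coeff d ≠ 0 := by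
      rw [hd, ← Polynomial.leadingCoeff]
      exact Polynomial.leadingCoeff_ne_zero.mpr hq0
    omega
  -- Step 2: look at coefficient d + m
  have hdm := hq (d + m)
  rw [coeff_add, coeff_mul] at hdm
  have hdmmem : ((d, m) : ℕ × ℕ) ∈ Finset.HasAntidiagonal.antidiagonal (d + m) := by simp
  rw [← Finset.sum_erase_add _ _ hdmmem] at hdm
  have hrest0 : ∑ x ∈ (Finset.HasAntidiagonal.antidiagonal (d + m)).erase (d, m),
      q.coeff x.1 * P.coeff x.2 ≤ 0 := by
    apply Finset.sum_nonpos
    intro x hx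
    have hx1 := Finset.mem_of_mem_erase hx
    rw [Finset.HasAntidiagonal.mem_antidiagonal] at hx1
    have hxne := Finset.ne_of_mem_erase hx
    rcases lt_trichotomy x.1 d with h' | h' | h'
    · have : m < x.2 := by omega
      rw [Polynomial.coeff_eq_zero_of_natDegree_lt (by omega : P.natDegree < x.2), mul_zero]
    · exfalso; apply hxne; exact Prod.ext h' (by omega)
    · rw [Polynomial.coeff_eq_zero_of_natDegree_lt (by omega : q.natDegree < x.1), zero_mul]
  dsimp only at hdm
  rw [hPm, mul_one] at hdm
  have hδdm : (X ^ n : Polynomial ℤ).coeff (d + m) ≤ 1 := by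
    rw [coeff_X_pow]; split <;> norm_num
  -- conclude n = d + m
  have hn : n = d + m := by
    by_contra hne
    have : (X ^ n : Polynomial ℤ).coeff (d + m) = 0 := by
      rw [coeff_X_pow, if_neg (fun h => hne h.symm)]
    omega
  -- Step 3: coefficient at d + i₀ is negative, contradiction
  obtain ⟨i₀, hi₀pos, hi₀m, hi₀nz⟩ := hnz
  have hPi₀ : 1 ≤ P.coeff i₀ := by
    have := hP1 i₀ hi₀pos; omega
  have hk := hq (d + i₀)
  rw [coeff_add, coeff_mul] at hk
  have hkmem : ((d, i₀) : ℕ × ℕ) ∈ Finset.HasAntidiagonal.antidiagonal (d + i₀) := by simp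
  rw [← Finset.sum_erase_add _ _ hkmem] at hk
  dsimp only at hk
  have hrest1 : ∑ x ∈ (Finset.HasAntidiagonal.antidiagonal (d + i₀)).erase (d, i₀),
      q.coeff x.1 * P.coeff x.2 ≤ 0 := by
    apply Finset.sum_nonpos
    intro x hx
    have hx1 := Finset.mem_of_mem_erase hx
    rw [Finset.HasAntidiagonal.mem_antidiagonal] at hx1
    have hxne := Finset.ne_of_mem_erase hx
    rcases lt_or_ge d x.1 with h' | h'
    · rw [Polynomial.coeff_eq_zero_of_natDegree_lt (by omega : q.natDegree < x.1), zero_mul]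
    · have hx2pos : 0 < x.2 := by
        by_contra hz
        push_neg at hz
        have h2 : x.2 = 0 := by omega
        exact absurd hx1 (by omega)
      exact mul_nonpos_of_nonpos_of_nonneg (hneg x.1) (hP1 x.2 hx2pos)
  have hXz : (X ^ n : Polynomial ℤ).coeff (d + i₀) = 0 := by
    rw [coeff_X_pow, if_neg (by omega)]
  have hterm : q.coeff d * P.coeff i₀ ≤ -1 := by nlinarith
  rw [hXz] at hk
  omega

lemma evalN_map (α : ℝ) (f : Polynomial ℕ) :
    Polynomial.aeval α (f.map (Nat.castRingHom ℤ)) = evalN α f := by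
  rw [aeval_def, eval₂_map]
  congr 1

lemma pow_atom (α : ℝ) (hα : 0 < α) (m : ℕ) (P : Polynomial ℤ) (c : ℤ)
    (hc : 1 < c) (hmonic : P.Monic) (hdeg : P.natDegree = m)
    (hcoeff : ∀ i, 0 < i → i < m → 0 ≤ P.coeff i)
    (hnz : ∃ i, 0 < i ∧ i < m ∧ P.coeff i ≠ 0)
    (h0 : P.coeff 0 = -c)
    (hmin : IsMinPolyZ α P) (n : ℕ) : IsAtomIn α (α ^ n) := by
  refine ⟨⟨X ^ n, by simp [evalN]⟩, pow_ne_zero n hα.ne', ?_⟩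
  rintro b c' ⟨f, rfl⟩ ⟨g, rfl⟩ heq
  set F := f.map (Nat.castRingHom ℤ) with hF
  set G := g.map (Nat.castRingHom ℤ) with hG
  have hg0 : Polynomial.aeval α (F + G - X ^ n) = 0 := by
    rw [map_sub, map_add, evalN_map, evalN_map, map_pow, aeval_X]
    rw [heq]; ring
  have hmod : (F + G - X ^ n) %ₘ P = 0 := by
    by_contra hne
    have hlt := Polynomial.degree_modByMonic_lt (F + G - X ^ n) hmonic
    have hle := hmin.2.2.2 _ hne ?_
    · exact absurd (lt_of_le_of_lt hle hlt) (lt_irrefl _)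
    · have hdiv := Polynomial.modByMonic_add_div (F + G - X ^ n) P
      have h2 : (F + G - X ^ n) %ₘ P
          = (F + G - X ^ n) - P * ((F + G - X ^ n) /ₘ P) :=
        eq_sub_of_add_eq hdiv
      rw [h2, map_sub, map_mul, hmin.1, hg0]; ring
  have heqP : F + G = X ^ n + ((F + G - X ^ n) /ₘ P) * P := by
    have hdiv := Polynomial.modByMonic_add_div (F + G - X ^ n) P
    rw [hmod, zero_add] at hdiv
    rw [mul_comm, hdiv]; ring
  have hq0 : ((F + G - X ^ n) /ₘ P) = 0 := by
    apply key_aux m P c hc hmonic hdeg hcoeff hnz h0 n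
    intro k
    rw [← heqP, coeff_add, hF, hG, coeff_map, coeff_map]
    exact add_nonneg (Int.natCast_nonneg _) (Int.natCast_nonneg _)
  rw [hq0, zero_mul, add_zero] at heqP
  have hfg : f + g = X ^ n := by
    apply Polynomial.map_injective (Nat.castRingHom ℤ) Nat.cast_injective
    rw [Polynomial.map_add, Polynomial.map_pow, Polynomial.map_X]
    exact heqP
  have hco : ∀ k, f.coeff k + g.coeff k = (X ^ n : Polynomial ℕ).coeff k := by
    intro k
    rw [← coeff_add, hfg]
  rcases Nat.eq_zero_or_pos (f.coeff n) with hfn | hfn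
  · left
    have hf0 : f = 0 := by
      ext k
      rw [Polynomial.coeff_zero]
      have := hco k
      rw [coeff_X_pow] at this
      by_cases hk : k = n
      · subst hk; exact hfn
      · rw [if_neg hk] at this; omega
    rw [hf0]; simp [evalN]
  · right
    have hg0' : g = 0 := by
      ext k
      rw [Polynomial.coeff_zero]
      have := hco k
      rw [coeff_X_pow] at this
      by_cases hk : k = n
      · subst hk; rw [if_pos rfl] at this; omega
      · rw [if_neg hk] at this; omega
    rw [hg0']; simp [evalN]

-- decomposition of evalN α f into powers
lemma evalN_decomp (α : ℝ) (f : Polynomial ℕ) :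
    ∃ s : Multiset ℝ, (∀ a ∈ s, ∃ i, a = α ^ i) ∧ s.sum = evalN α f := by
  refine ⟨f.support.val.bind fun i => Multiset.replicate (f.coeff i) (α ^ i), ?_, ?_⟩
  · intro a ha
    rw [Multiset.mem_bind] at ha
    obtain ⟨i, _, hrep⟩ := ha
    exact ⟨i, Multiset.eq_of_mem_replicate hrep⟩
  · rw [Multiset.sum_bind]
    have h1 : evalN α f = ∑ i ∈ f.support, (f.coeff i : ℝ) * α ^ i := by
      rw [evalN, eval₂_eq_sum, Polynomial.sum_def]
      rfl
    rw [h1, Finset.sum]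
    congr 1
    apply Multiset.map_congr rfl
    intro i _
    rw [Multiset.sum_replicate, nsmul_eq_mul]

-- every element of a closure of S which is an atom lies in S
lemma atom_mem_gen (α : ℝ) (S : Set ℝ) (hsub : S ⊆ (Nmon α : Set ℝ))
    (l : Multiset ℝ) : (∀ y ∈ l, y ∈ S) → ∀ a, IsAtomIn α a → l.sum = a →
    a ∈ S := by
  induction l using Multiset.strongInductionOn with
  | _ l ih =>
    intro hl a ha hsum
    by_cases hl0 : l = 0
    · exfalso; apply ha.2.1; rw [← hsum, hl0, Multiset.sum_zero]
    · obtain ⟨b, hb⟩ := Multiset.exists_mem_of_ne_zero hl0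
      obtain ⟨t, rfl⟩ := Multiset.exists_cons_of_mem hb
      rw [Multiset.sum_cons] at hsum
      have hbS : b ∈ S := hl b (Multiset.mem_cons_self b t)
      have hbmem : b ∈ Nmon α := hsub hbS
      have htmem : t.sum ∈ Nmon α :=
        AddSubmonoid.multiset_sum_mem _ t fun y hy =>
          hsub (hl y (Multiset.mem_cons_of_mem hy))
      rcases ha.2.2 b t.sum hbmem htmem hsum.symm with h | h
      · apply ih t (Multiset.lt_cons_self t b)
          (fun y hy => hl y (Multiset.mem_cons_of_mem hy)) a ha
        rw [← hsum, h, zero_add]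
      · rw [h, add_zero] at hsum
        rwa [hsum] at hbS

lemma pow_inj (α : ℝ) (hα : 0 < α) (hne1 : α ≠ 1) :
    Function.Injective (fun n : ℕ => α ^ n) := by
  intro i j hij
  simp only at hij
  by_contra hne
  rcases Nat.lt_or_ge i j with h | h
  · rcases lt_trichotomy α 1 with h1 | h1 | h1
    · exact absurd hij (ne_of_gt (pow_lt_pow_right_of_lt_one₀ hα h1 h))
    · exact hne1 h1
    · exact absurd hij (ne_of_lt (pow_lt_pow_right₀ h1 h))
  · have h' : j < i := by omega
    rcases lt_trichotomy α 1 with h1 | h1 | h1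
    · exact absurd hij (ne_of_lt (pow_lt_pow_right_of_lt_one₀ hα h1 h'))
    · exact hne1 h1
    · exact absurd hij (ne_of_gt (pow_lt_pow_right₀ h1 h'))

/-- if 𝔪_α = X^m + p_{m-1}X^{m-1} + ⋯ + p₁X - c with
pᵢ ≥ 0 not all zero and c > 1, then ℕ₀[α] is atomic but not finitely generated. -/
theorem stmt1 (α : ℝ) (hα : 0 < α) (m : ℕ) (P : Polynomial ℤ) (c : ℤ)
    (hc : 1 < c) (hmonic : P.Monic) (hdeg : P.natDegree = m)
    (hcoeff : ∀ i, 0 < i → i < m → 0 ≤ P.coeff i)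
    (hnz : ∃ i, 0 < i ∧ i < m ∧ P.coeff i ≠ 0)
    (h0 : P.coeff 0 = -c)
    (hmin : IsMinPolyZ α P) :
    AtomicM α ∧ ¬ (Nmon α).FG := by
  have hatom : ∀ n : ℕ, IsAtomIn α (α ^ n) :=
    pow_atom α hα m P c hc hmonic hdeg hcoeff hnz h0 hmin
  constructor
  · rintro x ⟨f, rfl⟩ -
    obtain ⟨s, hs, hsum⟩ := evalN_decomp α f
    exact ⟨s, fun a ha => by obtain ⟨i, rfl⟩ := hs a ha; exact hatom i, hsum⟩
  · rintro ⟨S, hS⟩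
    have hsub : (S : Set ℝ) ⊆ (Nmon α : Set ℝ) := by
      rw [← hS]; exact AddSubmonoid.subset_closure
    have hne1 : α ≠ 1 := by
      intro h1
      have hdg : P.degree ≤ (X - Polynomial.C 1 : Polynomial ℤ).degree := by
        apply hmin.2.2.2
        · exact Polynomial.X_sub_C_ne_zero 1
        · simp [h1]
      have hle : P.natDegree ≤ 1 := by
        have h2 := Polynomial.natDegree_le_natDegree hdg
        rwa [Polynomial.natDegree_X_sub_C] at h2
      obtain ⟨i, hi1, hi2, _⟩ := hnz
      omega
    have hmemS : ∀ n : ℕ, α ^ n ∈ (S : Set ℝ) := by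
      intro n
      have hmem : α ^ n ∈ AddSubmonoid.closure (S : Set ℝ) := by
        rw [hS]; exact (hatom n).1
      obtain ⟨l, hl, hsum⟩ := AddSubmonoid.exists_multiset_of_mem_closure hmem
      exact atom_mem_gen α S hsub l hl _ (hatom n) hsum
    have hinf := Set.infinite_range_of_injective (pow_inj α hα hne1)
    apply hinf
    apply Set.Finite.subset S.finite_toSet
    rintro x ⟨n, rfl⟩
    exact hmemS n
end

section
/- If the additive monoid ℕ₀[α] is finitely generated for a positive real algebraic number α, then α is a weak Perron number: every Galois conjugate β of α satisfies |β| ≤ α. -/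
open Polynomial

lemma key_ineq (q : Polynomial ℕ) (D : ℕ) (hdeg : q.natDegree ≤ D)
    (α : ℝ) (hα : 0 < α) (hroot : α ^ (D + 1) = evalN α q)
    (β : ℂ) (hβ : β ^ (D + 1) = Polynomial.eval₂ (Nat.castRingHom ℂ) β q) :
    ‖β‖ ≤ α := by
  by_contra hcon
  push_neg at hcon
  set t := ‖β‖ with ht
  have ht0 : 0 < t := hα.trans hcon
  set c : ℝ := t / α with hc
  have hc1 : 1 < c := (one_lt_div hα).2 hcon
  have htac : t = α * c := by rw [hc]; field_simp [hα.ne']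
  have h1 : t ^ (D + 1) ≤ ∑ i ∈ q.support, (q.coeff i : ℝ) * t ^ i := by
    have : t ^ (D + 1) = ‖β ^ (D + 1)‖ := by rw [norm_pow]
    rw [this, hβ, Polynomial.eval₂_eq_sum, Polynomial.sum]
    refine (norm_sum_le _ _).trans_eq ?_
    refine Finset.sum_congr rfl fun i _ => ?_
    simp [map_mul, map_pow, ht]
  have h2 : ∑ i ∈ q.support, (q.coeff i : ℝ) * t ^ i ≤ α * t ^ D := by
    have hterm : ∀ i ∈ q.support, (q.coeff i : ℝ) * t ^ i ≤ (q.coeff i : ℝ) * α ^ i * c ^ D := by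
      intro i hi
      have hiD : i ≤ D := (Polynomial.le_natDegree_of_mem_supp i hi).trans hdeg
      rw [htac, mul_pow, ← mul_assoc]
      have hcc := pow_le_pow_right₀ hc1.le hiD
      have h0 : (0:ℝ) ≤ (q.coeff i : ℝ) * α ^ i := by positivity
      exact mul_le_mul_of_nonneg_left hcc h0
    refine (Finset.sum_le_sum hterm).trans ?_
    rw [← Finset.sum_mul]
    have hsum : ∑ i ∈ q.support, (q.coeff i : ℝ) * α ^ i = α ^ (D + 1) := by
      rw [hroot, evalN, Polynomial.eval₂_eq_sum, Polynomial.sum]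
      simp
    rw [hsum]
    have : α ^ (D + 1) * c ^ D = α * t ^ D := by
      rw [htac, mul_pow, pow_succ]
      ring
    rw [this]
  have h3 : α * t ^ D < t ^ (D + 1) := by
    rw [pow_succ, mul_comm]
    exact mul_lt_mul_of_pos_left hcon (by positivity)
  linarith

/-- if ℕ₀[α] is finitely generated, then α is a weak Perron number. -/
theorem stmt2 (α : ℝ) (hα : 0 < α) (halg : IsAlgebraic ℚ α)
    (hfg : (Nmon α).FG) :
    ∀ β : ℂ, Polynomial.aeval β (minpoly ℚ α) = 0 → ‖β‖ ≤ α := by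
  intro β hβroot
  obtain ⟨S, hS⟩ := hfg
  -- choose representing polynomials for generators
  classical
  have hmem : ∀ x ∈ Nmon α, ∃ f : Polynomial ℕ, evalN α f = x := fun x hx => hx
  set φ : ℝ → ℕ := fun x =>
    if h : ∃ f : Polynomial ℕ, evalN α f = x then h.choose.natDegree else 0 with hφ
  set D : ℕ := S.sup φ with hD
  -- the submonoid of values of polynomials of degree ≤ D
  set P : AddSubmonoid ℝ :=
    { carrier := { x | ∃ g : Polynomial ℕ, g.natDegree ≤ D ∧ evalN α g = x }
      zero_mem' := ⟨0, by simp, by simp [evalN]⟩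
      add_mem' := by
        rintro a b ⟨f, hf, rfl⟩ ⟨g, hg, rfl⟩
        exact ⟨f + g, (Polynomial.natDegree_add_le f g).trans (max_le hf hg),
          by simp [evalN]⟩ } with hP
  have hSP : (S : Set ℝ) ⊆ P := by
    intro x hx
    have hxN : x ∈ Nmon α := by
      rw [← hS]; exact AddSubmonoid.subset_closure hx
    have h : ∃ f : Polynomial ℕ, evalN α f = x := hmem x hxN
    refine ⟨h.choose, ?_, h.choose_spec⟩
    have : φ x = h.choose.natDegree := by rw [hφ]; exact dif_pos h
    rw [← this]
    exact Finset.le_sup hx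
  have hNP : Nmon α ≤ P := by
    rw [← hS]
    exact AddSubmonoid.closure_le.2 hSP
  have hpow : (α ^ (D + 1) : ℝ) ∈ Nmon α := ⟨X ^ (D + 1), by simp [evalN]⟩
  obtain ⟨q, hqdeg, hqval⟩ := hNP hpow
  -- the rational polynomial X^(D+1) - q
  set m : Polynomial ℚ := X ^ (D + 1) - q.map (Nat.castRingHom ℚ) with hm
  have hcompR : (algebraMap ℚ ℝ).comp (Nat.castRingHom ℚ) = Nat.castRingHom ℝ :=
    Subsingleton.elim _ _
  have hcompC : (algebraMap ℚ ℂ).comp (Nat.castRingHom ℚ) = Nat.castRingHom ℂ :=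
    Subsingleton.elim _ _
  have hmα : Polynomial.aeval α m = 0 := by
    rw [hm, map_sub, map_pow, Polynomial.aeval_X, Polynomial.aeval_def,
      Polynomial.eval₂_map, hcompR]
    rw [← evalN, ← hqval]
    ring
  have hdvd : minpoly ℚ α ∣ m := minpoly.dvd ℚ α hmα
  obtain ⟨k, hk⟩ := hdvd
  have hmβ : Polynomial.aeval β m = 0 := by
    rw [hk, map_mul, hβroot, zero_mul]
  have hβeq : β ^ (D + 1) = Polynomial.eval₂ (Nat.castRingHom ℂ) β q := by
    rw [hm, map_sub, map_pow, Polynomial.aeval_X, Polynomial.aeval_def,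
      Polynomial.eval₂_map, hcompC, sub_eq_zero] at hmβ
    exact hmβ
  exact key_ineq q D hqdeg α hα hqval.symm β hβeq
end

section
/- Let a, b, c be positive integers and α a positive real algebraic number with minimal polynomial X³ + aX² - bX - c. There is no integer d such that (X³ + aX² - bX - c)(X + d) has the form X⁴ - c₃X³ - c₂X² - c₁X - c₀ with all c_i nonnegative. -/
open Polynomial

/-- for the minimal polynomial X³ + aX² - bX - c of α (a,b,c > 0),
no linear integer factor X + d makes the product a degree-4 negative tail polynomial. -/
theorem stmt9 (a b c : ℤ) (ha : 0 < a) (hb : 0 < b) (hc : 0 < c)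
    (α : ℝ) (hα : 0 < α)
    (hmin : minpoly ℚ α =
      X ^ 3 + Polynomial.C (a : ℚ) * X ^ 2 - Polynomial.C (b : ℚ) * X - Polynomial.C (c : ℚ)) :
    ¬ ∃ (d c0 c1 c2 c3 : ℤ), 0 ≤ c0 ∧ 0 ≤ c1 ∧ 0 ≤ c2 ∧ 0 ≤ c3 ∧
      (X ^ 3 + Polynomial.C a * X ^ 2 - Polynomial.C b * X - Polynomial.C c) *
          (X + Polynomial.C d) =
        X ^ 4 - Polynomial.C c3 * X ^ 3 - Polynomial.C c2 * X ^ 2 -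
          Polynomial.C c1 * X - Polynomial.C c0 := by
  rintro ⟨d, c0, c1, c2, c3, h0, h1, h2, h3, heq⟩
  have e0 := congrArg (Polynomial.coeff · 0) heq
  have e3 := congrArg (Polynomial.coeff · 3) heq
  rw [mul_add] at e3
  simp only [Polynomial.coeff_add, Polynomial.coeff_mul_X, Polynomial.coeff_mul_C,
    Polynomial.coeff_sub, Polynomial.coeff_X_pow, Polynomial.coeff_C_mul, Polynomial.coeff_C,
    Polynomial.coeff_X] at e3
  simp [Polynomial.coeff_mul, mul_comm] at e0
  norm_num at e3
  nlinarith
end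

section
/- If α is a positive real algebraic number with minimal polynomial of the form X³ + aX² - bX - c (a, b, c positive integers) and ℕ₀[α] is atomic, then ℕ₀[α] is not a length-factorial monoid. -/
open Polynomial

/-! ### Auxiliary lemmas -/

lemma evalN_nonneg (α : ℝ) (hα : 0 ≤ α) (f : Polynomial ℕ) : 0 ≤ evalN α f := by
  rw [evalN, Polynomial.eval₂_eq_eval_map, Polynomial.eval_eq_sum_range]
  apply Finset.sum_nonneg
  intro i _
  apply mul_nonneg _ (pow_nonneg hα i)
  simp [Polynomial.coeff_map]

lemma mem_nonneg (α : ℝ) (hα : 0 ≤ α) (x : ℝ) (hx : x ∈ Nmon α) : 0 ≤ x := by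
  obtain ⟨f, rfl⟩ := hx
  exact evalN_nonneg α hα f

lemma npow_mem (α : ℝ) (k : ℕ) : α ^ k ∈ Nmon α :=
  ⟨X ^ k, by simp [evalN]⟩

lemma atom_pow (α : ℝ) (hα : 0 < α) (x : ℝ) (hx : IsAtomIn α x) : ∃ e, x = α ^ e := by
  obtain ⟨⟨f, rfl⟩, hne, hsplit⟩ := hx
  have hf : f ≠ 0 := by rintro rfl; simp [evalN] at hne
  set e := f.natDegree with he
  have hlc : f.leadingCoeff ≠ 0 := Polynomial.leadingCoeff_ne_zero.mpr hf
  have hdecomp : f = (f.eraseLead + Polynomial.monomial e (f.leadingCoeff - 1)) +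
      Polynomial.monomial e 1 := by
    rw [add_assoc, ← map_add (Polynomial.monomial e)]
    rw [Nat.sub_add_cancel (Nat.one_le_iff_ne_zero.mpr hlc)]
    exact (Polynomial.eraseLead_add_monomial_natDegree_leadingCoeff f).symm
  have h1 : evalN α (Polynomial.monomial e 1) = α ^ e := by
    simp [evalN, Polynomial.eval₂_monomial]
  have hsum : evalN α f = evalN α (f.eraseLead + Polynomial.monomial e (f.leadingCoeff - 1))
      + α ^ e := by
    conv_lhs => rw [hdecomp]
    rw [evalN, Polynomial.eval₂_add, ← h1]; rfl
  rcases hsplit _ _ ⟨_, rfl⟩ (npow_mem α e) hsum with h | h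
  · exact ⟨e, by rw [hsum, h, zero_add]⟩
  · exact absurd h (ne_of_gt (pow_pos hα e))

def useq (a b c : ℤ) : ℕ → ℤ × ℤ × ℤ
  | 0 => (0, 0, 1)
  | k+1 => ((useq a b c k).2.1 - a * (useq a b c k).1,
            (useq a b c k).2.2 + b * (useq a b c k).1,
            c * (useq a b c k).1)

lemma ucoords (a b c : ℤ) (α : ℝ) (hE : α^3 + (a:ℝ)*α^2 - (b:ℝ)*α - (c:ℝ) = 0) (k : ℕ) :
    α ^ k = ((useq a b c k).1 : ℝ) * α^2 + ((useq a b c k).2.1 : ℝ) * α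
      + ((useq a b c k).2.2 : ℝ) := by
  induction k with
  | zero => simp [useq]
  | succ n ih =>
    have hstep : α ^ (n+1) = α * α ^ n := by ring
    rw [hstep, ih, useq]
    push_cast
    linear_combination ((useq a b c n).1 : ℝ) * hE

lemma sum_members (v0 v1 v2 v3 : ℝ) (s : Multiset ℝ)
    (h : ∀ x ∈ s, x = v0 ∨ x = v1 ∨ x = v2 ∨ x = v3) :
    ∃ n0 n1 n2 n3 : ℕ, s.sum = n0 * v0 + n1 * v1 + n2 * v2 + n3 * v3 := by
  revert h
  induction s using Multiset.induction_on with
  | empty => intro _; exact ⟨0, 0, 0, 0, by simp⟩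
  | cons x s ih =>
    intro h
    obtain ⟨n0, n1, n2, n3, hs⟩ := ih (fun y hy => h y (Multiset.mem_cons_of_mem hy))
    rcases h x (Multiset.mem_cons_self x s) with rfl | rfl | rfl | rfl
    · exact ⟨n0 + 1, n1, n2, n3, by rw [Multiset.sum_cons, hs]; push_cast; ring⟩
    · exact ⟨n0, n1 + 1, n2, n3, by rw [Multiset.sum_cons, hs]; push_cast; ring⟩
    · exact ⟨n0, n1, n2 + 1, n3, by rw [Multiset.sum_cons, hs]; push_cast; ring⟩
    · exact ⟨n0, n1, n2, n3 + 1, by rw [Multiset.sum_cons, hs]; push_cast; ring⟩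

lemma indep (a b c : ℤ) (α : ℝ)
    (hmin : minpoly ℚ α = X ^ 3 + Polynomial.C (a : ℚ) * X ^ 2 - Polynomial.C (b : ℚ) * X
      - Polynomial.C (c : ℚ))
    (r0 r1 r2 : ℤ) (h : (r0:ℝ) + (r1:ℝ)*α + (r2:ℝ)*α^2 = 0) :
    r0 = 0 ∧ r1 = 0 ∧ r2 = 0 := by
  set p : ℚ[X] := Polynomial.C (r0:ℚ) + Polynomial.C (r1:ℚ) * X + Polynomial.C (r2:ℚ) * X^2
    with hp
  have hdeg3 : (minpoly ℚ α).degree = 3 := by rw [hmin]; compute_degree!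
  have hav : aeval α p = 0 := by
    simp only [hp, map_add, map_mul, map_pow, aeval_X, aeval_C, eq_ratCast]
    push_cast
    linear_combination h
  have hp0 : p = 0 := by
    by_contra hpne
    have hle := minpoly.degree_le_of_ne_zero ℚ α hpne hav
    have hd2 : p.degree ≤ 2 := by rw [hp]; compute_degree
    rw [hdeg3] at hle
    have : (3 : WithBot ℕ) ≤ 2 := le_trans hle hd2
    norm_num at this
  have c0 : r0 = 0 := by
    have h' := congrArg (fun q => Polynomial.coeff q 0) hp0
    simp only [hp, coeff_add, coeff_C_mul, coeff_X_pow, coeff_C, coeff_zero, coeff_X] at h'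
    norm_num at h'; exact h'
  have c1 : r1 = 0 := by
    have h' := congrArg (fun q => Polynomial.coeff q 1) hp0
    simp only [hp, coeff_add, coeff_C_mul, coeff_X_pow, coeff_C, coeff_zero, coeff_X] at h'
    norm_num at h'; exact h'
  have c2 : r2 = 0 := by
    have h' := congrArg (fun q => Polynomial.coeff q 2) hp0
    simp only [hp, coeff_add, coeff_C_mul, coeff_X_pow, coeff_C, coeff_zero, coeff_X] at h'
    norm_num at h'; exact h'
  exact ⟨c0, c1, c2⟩

set_option maxHeartbeats 2000000 in
lemma no5 (a b c : ℤ) (α : ℝ) (hα : 0 < α) (hne1 : α ≠ 1)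
    (hE : α^3 + (a:ℝ)*α^2 - (b:ℝ)*α - (c:ℝ) = 0) (hL : IsLFM α)
    (e : Fin 5 → ℕ) (hinj : Function.Injective e)
    (hat : ∀ i, IsAtomIn α (α ^ e i)) : False := by
  classical
  have hpowinj : Function.Injective (fun n : ℕ => α ^ n) := by
    rcases hne1.lt_or_gt with h | h
    · exact (pow_right_strictAnti₀ hα h).injective
    · exact (pow_right_strictMono₀ h).injective
  have hv : ∀ i j : Fin 5, (α ^ e i = α ^ e j) ↔ i = j := fun i j =>
    ⟨fun h => hinj (hpowinj h), fun h => by rw [h]⟩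
  set v : Fin 5 → (Fin 4 → ℤ) := fun i =>
    ![(useq a b c (e i)).1, (useq a b c (e i)).2.1, (useq a b c (e i)).2.2, 1] with hvdef
  have hnli : ¬ LinearIndependent ℤ v := by
    intro hli
    have h1 := hli.fintype_card_le_finrank
    rw [Module.finrank_pi] at h1
    simp at h1
  obtain ⟨g, hg, j, hj⟩ := Fintype.not_linearIndependent_iff.mp hnli
  have hcomp : ∀ r : Fin 4,
      g 0 * v 0 r + g 1 * v 1 r + g 2 * v 2 r + g 3 * v 3 r + g 4 * v 4 r = 0 := by
    intro r
    have h' := congrFun hg r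
    simpa [Fin.sum_univ_five] using h'
  have hA := hcomp 0
  have hB := hcomp 1
  have hC := hcomp 2
  have hmass := hcomp 3
  simp only [hvdef, Matrix.cons_val_zero, Matrix.cons_val_one, Matrix.head_cons,
    Matrix.cons_val_two, Matrix.cons_val_three, Matrix.tail_cons, Matrix.cons_val_fin_one,
    mul_one] at hA hB hC hmass
  -- real-valued relation
  have hval : (g 0 : ℝ) * α ^ e 0 + (g 1 : ℝ) * α ^ e 1 + (g 2 : ℝ) * α ^ e 2
      + (g 3 : ℝ) * α ^ e 3 + (g 4 : ℝ) * α ^ e 4 = 0 := by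
    have hAr : ((g 0 * (useq a b c (e 0)).1 + g 1 * (useq a b c (e 1)).1
        + g 2 * (useq a b c (e 2)).1 + g 3 * (useq a b c (e 3)).1
        + g 4 * (useq a b c (e 4)).1 : ℤ) : ℝ) = ((0 : ℤ) : ℝ) :=
      congrArg (fun z : ℤ => (z : ℝ)) hA
    have hBr : ((g 0 * (useq a b c (e 0)).2.1 + g 1 * (useq a b c (e 1)).2.1
        + g 2 * (useq a b c (e 2)).2.1 + g 3 * (useq a b c (e 3)).2.1
        + g 4 * (useq a b c (e 4)).2.1 : ℤ) : ℝ) = ((0 : ℤ) : ℝ) :=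
      congrArg (fun z : ℤ => (z : ℝ)) hB
    have hCr : ((g 0 * (useq a b c (e 0)).2.2 + g 1 * (useq a b c (e 1)).2.2
        + g 2 * (useq a b c (e 2)).2.2 + g 3 * (useq a b c (e 3)).2.2
        + g 4 * (useq a b c (e 4)).2.2 : ℤ) : ℝ) = ((0 : ℤ) : ℝ) :=
      congrArg (fun z : ℤ => (z : ℝ)) hC
    push_cast at hAr hBr hCr
    rw [ucoords a b c α hE (e 0), ucoords a b c α hE (e 1), ucoords a b c α hE (e 2),
      ucoords a b c α hE (e 3), ucoords a b c α hE (e 4)]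
    linear_combination α^2 * hAr + α * hBr + hCr
  -- build the two multisets
  set s : Multiset ℝ :=
    Multiset.replicate (g 0).toNat (α ^ e 0) + Multiset.replicate (g 1).toNat (α ^ e 1)
    + Multiset.replicate (g 2).toNat (α ^ e 2) + Multiset.replicate (g 3).toNat (α ^ e 3)
    + Multiset.replicate (g 4).toNat (α ^ e 4) with hsdef
  set t : Multiset ℝ :=
    Multiset.replicate (-g 0).toNat (α ^ e 0) + Multiset.replicate (-g 1).toNat (α ^ e 1)
    + Multiset.replicate (-g 2).toNat (α ^ e 2) + Multiset.replicate (-g 3).toNat (α ^ e 3)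
    + Multiset.replicate (-g 4).toNat (α ^ e 4) with htdef
  have hsat : ∀ x ∈ s, IsAtomIn α x := by
    intro x hx
    simp only [hsdef, Multiset.mem_add] at hx
    rcases hx with ((((hx | hx) | hx) | hx) | hx) <;>
      rw [Multiset.eq_of_mem_replicate hx] <;> exact hat _
  have htat : ∀ x ∈ t, IsAtomIn α x := by
    intro x hx
    simp only [htdef, Multiset.mem_add] at hx
    rcases hx with ((((hx | hx) | hx) | hx) | hx) <;>
      rw [Multiset.eq_of_mem_replicate hx] <;> exact hat _
  have hpq : ∀ i : Fin 5, ((g i).toNat : ℝ) - ((-g i).toNat : ℝ) = (g i : ℝ) := by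
    intro i
    have h' : ((g i).toNat : ℤ) - ((-g i).toNat : ℤ) = g i := by omega
    exact_mod_cast congrArg (Int.cast : ℤ → ℝ) h'
  have hsums : s.sum = t.sum := by
    simp only [hsdef, htdef, Multiset.sum_add, Multiset.sum_replicate, nsmul_eq_mul]
    linear_combination hval + (α ^ e 0) * hpq 0 + (α ^ e 1) * hpq 1 + (α ^ e 2) * hpq 2
      + (α ^ e 3) * hpq 3 + (α ^ e 4) * hpq 4
  have hcards : Multiset.card s = Multiset.card t := by
    simp only [hsdef, htdef, Multiset.card_add, Multiset.card_replicate]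
    omega
  have heq := hL s t hsat htat hsums hcards
  have hc0 := congrArg (Multiset.count (α ^ e 0)) heq
  have hc1 := congrArg (Multiset.count (α ^ e 1)) heq
  have hc2 := congrArg (Multiset.count (α ^ e 2)) heq
  have hc3 := congrArg (Multiset.count (α ^ e 3)) heq
  have hc4 := congrArg (Multiset.count (α ^ e 4)) heq
  simp only [hsdef, htdef, Multiset.count_add, Multiset.count_replicate, hv] at hc0 hc1 hc2 hc3 hc4
  simp +decide at hc0 hc1 hc2 hc3 hc4
  have hzero : ∀ i : Fin 5, g i = 0 := by
    intro i
    fin_cases i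
    · show g 0 = 0; omega
    · show g 1 = 0; omega
    · show g 2 = 0; omega
    · show g 3 = 0; omega
    · show g 4 = 0; omega
  exact hj (hzero j)

/-- if the minimal polynomial of α is X³ + aX² - bX - c (a,b,c > 0)
and ℕ₀[α] is atomic, then ℕ₀[α] is not length-factorial. -/
theorem stmt10 (a b c : ℤ) (ha : 0 < a) (hb : 0 < b) (hc : 0 < c)
    (α : ℝ) (hα : 0 < α)
    (hmin : minpoly ℚ α =
      X ^ 3 + Polynomial.C (a : ℚ) * X ^ 2 - Polynomial.C (b : ℚ) * X - Polynomial.C (c : ℚ))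
    (hatomic : AtomicM α) :
    ¬ IsLFM α := by
  intro hL
  have hα0 : (0:ℝ) ≤ α := le_of_lt hα
  have hαne : α ≠ 0 := ne_of_gt hα
  have hE : α^3 + (a:ℝ)*α^2 - (b:ℝ)*α - (c:ℝ) = 0 := by
    have h0 := minpoly.aeval ℚ α
    rw [hmin] at h0
    simp only [map_add, map_sub, map_mul, map_pow, aeval_X, aeval_C, eq_ratCast] at h0
    push_cast at h0
    linarith [h0]
  have hne1 : α ≠ 1 := by
    intro h1
    have := (indep a b c α hmin 1 (-1) 0 (by rw [h1]; push_cast; ring)).2.1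
    norm_num at this
  have hrep : ∀ k : ℕ, ∃ s : Multiset ℝ, (∀ x ∈ s, IsAtomIn α x) ∧ s.sum = α ^ k :=
    fun k => hatomic _ (npow_mem α k) (pow_ne_zero k hαne)
  have hmemle : ∀ (s : Multiset ℝ), (∀ x ∈ s, IsAtomIn α x) → ∀ x ∈ s, x ≤ s.sum :=
    fun s hs x hx => Multiset.single_le_sum (fun y hy => mem_nonneg α hα0 y (hs y hy).1) x hx
  rcases hne1.lt_or_gt with hlt | hgt
  · -- case α < 1 : atoms of arbitrarily large exponent exist, contradiction with no5
    have hub : ∀ N : ℕ, ∃ E, N ≤ E ∧ IsAtomIn α (α ^ E) := by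
      intro N
      obtain ⟨s, hs, hsum⟩ := hrep N
      have hsne : s ≠ 0 := by
        intro h0
        rw [h0] at hsum
        simp only [Multiset.sum_zero] at hsum
        exact pow_ne_zero N hαne hsum.symm
      obtain ⟨x, hx⟩ := Multiset.exists_mem_of_ne_zero hsne
      obtain ⟨E, rfl⟩ := atom_pow α hα x (hs x hx)
      refine ⟨E, ?_, hs _ hx⟩
      by_contra hEN
      push_neg at hEN
      have h2 : α ^ N < α ^ E := pow_lt_pow_right_of_lt_one₀ hα hlt hEN
      have h3 : α ^ E ≤ α ^ N := hsum ▸ hmemle s hs _ hx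
      linarith
    obtain ⟨E0, _, hA0⟩ := hub 0
    obtain ⟨E1, h1, hA1⟩ := hub (E0+1)
    obtain ⟨E2, h2, hA2⟩ := hub (E1+1)
    obtain ⟨E3, h3, hA3⟩ := hub (E2+1)
    obtain ⟨E4, h4, hA4⟩ := hub (E3+1)
    refine no5 a b c α hα hne1 hE hL ![E0, E1, E2, E3, E4] ?_ ?_
    · intro i j hij
      fin_cases i <;> fin_cases j <;>
        simp only [Fin.zero_eta, Fin.mk_one, Fin.reduceFinMk, Matrix.cons_val_zero,
          Matrix.cons_val_one, Matrix.head_cons, Matrix.cons_val_two, Matrix.tail_cons,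
          Matrix.cons_val_three, Matrix.cons_val_four] at hij ⊢ <;>
        first
          | rfl
          | (exfalso; omega)
    · intro i
      fin_cases i
      · show IsAtomIn α (α ^ E0); exact hA0
      · show IsAtomIn α (α ^ E1); exact hA1
      · show IsAtomIn α (α ^ E2); exact hA2
      · show IsAtomIn α (α ^ E3); exact hA3
      · show IsAtomIn α (α ^ E4); exact hA4
  · -- case α > 1
    have hexp : ∀ (k : ℕ) (s : Multiset ℝ), (∀ x ∈ s, IsAtomIn α x) → s.sum = α ^ k →
        ∀ x ∈ s, ∃ e', e' ≤ k ∧ x = α ^ e' := by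
      intro k s hs hsum x hx
      obtain ⟨e', rfl⟩ := atom_pow α hα x (hs x hx)
      refine ⟨e', ?_, rfl⟩
      have hle : α ^ e' ≤ α ^ k := hsum ▸ hmemle s hs _ hx
      exact (pow_le_pow_iff_right₀ hgt).mp hle
    have atom0 : IsAtomIn α 1 := by
      obtain ⟨s, hs, hsum⟩ := hrep 0
      have hsne : s ≠ 0 := by
        intro h0
        rw [h0] at hsum
        simp at hsum
      obtain ⟨x, hx⟩ := Multiset.exists_mem_of_ne_zero hsne
      obtain ⟨e', he', hxe⟩ := hexp 0 s hs hsum x hx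
      have h0 : e' = 0 := Nat.le_zero.mp he'
      have hxa := hs x hx
      rw [hxe, h0, pow_zero] at hxa
      exact hxa
    have atom1 : IsAtomIn α α := by
      obtain ⟨s, hs, hsum⟩ := hrep 1
      by_cases hex : ∃ x ∈ s, x = α ^ 1
      · obtain ⟨x, hx, hxe⟩ := hex
        have hxa := hs x hx
        rw [hxe, pow_one] at hxa
        exact hxa
      · push_neg at hex
        have hall : ∀ x ∈ s, x = 1 ∨ x = 1 ∨ x = 1 ∨ x = 1 := by
          intro x hx
          obtain ⟨e', he', hxe⟩ := hexp 1 s hs hsum x hx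
          interval_cases e'
          · left; rw [hxe, pow_zero]
          · exact absurd hxe (hex x hx)
        obtain ⟨n0, n1, n2, n3, hsm⟩ := sum_members 1 1 1 1 s hall
        rw [hsum] at hsm
        have := (indep a b c α hmin (n0+n1+n2+n3) (-1) 0
          (by push_cast; linear_combination -hsm)).2.1
        norm_num at this
    have atom2 : IsAtomIn α (α ^ 2) := by
      obtain ⟨s, hs, hsum⟩ := hrep 2
      by_cases hex : ∃ x ∈ s, x = α ^ 2
      · obtain ⟨x, hx, hxe⟩ := hex
        exact hxe ▸ hs x hx
      · push_neg at hex
        have hall : ∀ x ∈ s, x = 1 ∨ x = α ∨ x = 1 ∨ x = 1 := by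
          intro x hx
          obtain ⟨e', he', hxe⟩ := hexp 2 s hs hsum x hx
          interval_cases e'
          · left; rw [hxe, pow_zero]
          · right; left; rw [hxe, pow_one]
          · exact absurd hxe (hex x hx)
        obtain ⟨n0, n1, n2, n3, hsm⟩ := sum_members 1 α 1 1 s hall
        rw [hsum] at hsm
        have := (indep a b c α hmin (n0+n2+n3) n1 (-1)
          (by push_cast; linear_combination -hsm)).2.2
        norm_num at this
    have atom3 : IsAtomIn α (α ^ 3) := by
      obtain ⟨s, hs, hsum⟩ := hrep 3
      by_cases hex : ∃ x ∈ s, x = α ^ 3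
      · obtain ⟨x, hx, hxe⟩ := hex
        exact hxe ▸ hs x hx
      · push_neg at hex
        have hall : ∀ x ∈ s, x = 1 ∨ x = α ∨ x = α ^ 2 ∨ x = 1 := by
          intro x hx
          obtain ⟨e', he', hxe⟩ := hexp 3 s hs hsum x hx
          interval_cases e'
          · left; rw [hxe, pow_zero]
          · right; left; rw [hxe, pow_one]
          · right; right; left; exact hxe
          · exact absurd hxe (hex x hx)
        obtain ⟨n0, n1, n2, n3, hsm⟩ := sum_members 1 α (α ^ 2) 1 s hall
        rw [hsum] at hsm
        have h3 := (indep a b c α hmin (n0+n3-c) (n1-b) (n2+a)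
          (by push_cast; linear_combination hE - hsm)).2.2
        omega
    have natom4 : ¬ IsAtomIn α (α ^ 4) := by
      intro hA4
      refine no5 a b c α hα hne1 hE hL ![0, 1, 2, 3, 4] ?_ ?_
      · intro i j hij
        fin_cases i <;> fin_cases j <;>
          simp only [Fin.zero_eta, Fin.mk_one, Fin.reduceFinMk, Matrix.cons_val_zero,
            Matrix.cons_val_one, Matrix.head_cons, Matrix.cons_val_two, Matrix.tail_cons,
            Matrix.cons_val_three, Matrix.cons_val_four] at hij ⊢ <;>
          first
            | rfl
            | (exfalso; omega)
      · intro i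
        fin_cases i
        · show IsAtomIn α (α ^ 0); rw [pow_zero]; exact atom0
        · show IsAtomIn α (α ^ 1); rw [pow_one]; exact atom1
        · show IsAtomIn α (α ^ 2); exact atom2
        · show IsAtomIn α (α ^ 3); exact atom3
        · show IsAtomIn α (α ^ 4); exact hA4
    obtain ⟨s, hs, hsum⟩ := hrep 4
    have hall : ∀ x ∈ s, x = 1 ∨ x = α ∨ x = α ^ 2 ∨ x = α ^ 3 := by
      intro x hx
      obtain ⟨e', he', hxe⟩ := hexp 4 s hs hsum x hx
      interval_cases e'
      · left; rw [hxe, pow_zero]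
      · right; left; rw [hxe, pow_one]
      · right; right; left; exact hxe
      · right; right; right; exact hxe
      · exact absurd (hxe ▸ hs x hx) natom4
    obtain ⟨n0, n1, n2, n3, hsm⟩ := sum_members 1 α (α ^ 2) (α ^ 3) s hall
    rw [hsum] at hsm
    have hkey := (indep a b c α hmin (n0 + n3*c + a*c) (n1 + n3*b - c + a*b)
      (n2 - n3*a - a^2 - b)
      (by push_cast; linear_combination (α - (a:ℝ) - (n3:ℝ)) * hE - hsm)).1
    have hac : (0:ℤ) < a*c := mul_pos ha hc
    have hn3c : (0:ℤ) ≤ (n3:ℤ)*c := mul_nonneg (by positivity) hc.le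
    have hn0 : (0:ℤ) ≤ (n0:ℤ) := by positivity
    linarith
end

section
/- For a prime p > 3, let α be the unique positive root of 𝔪(X) = X³ + X² - pX - 2p. Then ℕ₀[α] is atomic and has exactly 5 atoms, namely 1, α, α², α³, α⁴. -/
open Polynomial

lemma no_rat_root (p : ℕ) (hp : p.Prime) (hp3 : 3 < p) (q : ℚ)
    (hq : q^3 + q^2 - p*q - 2*p = 0) : False := by
  have h1 : (q.num : ℚ) = q * (q.den : ℚ) := by
    exact_mod_cast (Rat.mul_den_eq_num q).symm
  have key : (q.num:ℚ)^3 + (q.num:ℚ)^2*(q.den:ℚ) - p*q.num*(q.den:ℚ)^2 - 2*p*(q.den:ℚ)^3 = 0 := by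
    rw [h1]; linear_combination ((q.den:ℚ))^3 * hq
  have keyZ : q.num^3 + q.num^2*(q.den:ℤ) - p*q.num*(q.den:ℤ)^2 - 2*p*(q.den:ℤ)^3 = 0 := by
    exact_mod_cast key
  -- den divides num^3
  have hdvd : (q.den:ℤ) ∣ q.num^3 := ⟨p*q.num*(q.den:ℤ) + 2*p*(q.den:ℤ)^2 - q.num^2, by linarith [keyZ]⟩
  have hdvdN : q.den ∣ q.num.natAbs^3 := by
    have := Int.natAbs_dvd_natAbs.mpr hdvd
    simpa [Int.natAbs_pow] using this
  have hden : q.den = 1 := (Nat.Coprime.pow_right 3 q.reduced.symm).eq_one_of_dvd hdvdN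
  set n := q.num with hn
  have keyn : n^3 + n^2 - (p:ℤ)*n - 2*p = 0 := by
    rw [hden] at keyZ; push_cast at keyZ ⊢; linarith
  have hdvd4 : (n+2) ∣ 4 := ⟨n^2 - n + 2 - p, by linear_combination -keyn⟩
  have h4 : n + 2 ≤ 4 := Int.le_of_dvd (by norm_num) hdvd4
  have h4' : -(n+2) ≤ 4 := Int.le_of_dvd (by norm_num) (neg_dvd.mpr hdvd4)
  have hrange : -6 ≤ n ∧ n ≤ 2 := ⟨by linarith, by linarith⟩
  obtain ⟨hl, hr⟩ := hrange
  interval_cases n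
  · have : p = 45 := by omega
    subst this; norm_num at hp
  · omega
  · have : p = 24 := by omega
    subst this; norm_num at hp
  · have : p = 18 := by omega
    subst this; norm_num at hp
  · omega
  · omega
  · omega
  · omega
  · omega

lemma lin_indep (p : ℕ) (hp : p.Prime) (hp3 : 3 < p) (α : ℝ)
    (hroot : α ^ 3 + α ^ 2 - ↑p * α - 2 * ↑p = 0)
    (a b c : ℤ) (h : (a:ℝ) + (b:ℝ)*α + (c:ℝ)*α^2 = 0) :
    a = 0 ∧ b = 0 ∧ c = 0 := by
  -- helper: if α equals a rational, contradiction
  have hratα : ∀ r : ℚ, (r:ℝ) = α → False := by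
    intro r hr
    apply no_rat_root p hp hp3 r
    have : ((r^3 + r^2 - p*r - 2*p : ℚ) : ℝ) = 0 := by
      push_cast; rw [hr]; linear_combination hroot
    exact_mod_cast this
  by_cases hc : c = 0
  · subst hc
    by_cases hb : b = 0
    · subst hb
      refine ⟨?_, rfl, rfl⟩
      have : (a:ℝ) = 0 := by push_cast at h; linarith
      exact_mod_cast this
    · exfalso
      apply hratα (-(a:ℚ)/b)
      have hb' : (b:ℝ) ≠ 0 := Int.cast_ne_zero.mpr hb
      push_cast
      rw [div_eq_iff hb']
      linear_combination -h
  · exfalso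
    set K : ℤ := c*(c*p+a) + b*(c-b) with hK
    set L : ℤ := -(c-b)*a - 2*c^2*p with hL
    have hKL : (K:ℝ) * α = (L:ℝ) := by
      push_cast [hK, hL]
      linear_combination ((c:ℝ)*α + (c:ℝ) - (b:ℝ)) * h - (c:ℝ)^2 * hroot
    by_cases hK0 : K = 0
    · have hL0 : L = 0 := by
        have : (L:ℝ) = 0 := by rw [← hKL, hK0]; push_cast; ring
        exact_mod_cast this
      apply no_rat_root p hp hp3 ((b:ℚ)/c - 1)
      have hc' : (c:ℚ) ≠ 0 := Int.cast_ne_zero.mpr hc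
      have hKQ : ((c:ℚ)*(c*p+a) + b*(c-b)) = 0 := by exact_mod_cast congrArg (Int.cast : ℤ → ℚ) hK0
      have hLQ : (-((c:ℚ)-b)*a - 2*c^2*p) = 0 := by exact_mod_cast congrArg (Int.cast : ℤ → ℚ) hL0
      field_simp
      linear_combination (c:ℚ)*hLQ - ((b:ℚ)-c)*hKQ
    · apply hratα ((L:ℚ)/K)
      have hK' : (K:ℝ) ≠ 0 := Int.cast_ne_zero.mpr hK0
      push_cast
      rw [div_eq_iff (by exact_mod_cast hK')]
      push_cast at hKL
      linarith [hKL]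

lemma hasRep_pow (p : ℕ) (hp5 : 5 ≤ p) (α : ℝ)
    (hroot : α ^ 3 + α ^ 2 - ↑p * α - 2 * ↑p = 0) (n : ℕ) :
    ∃ e0 e1 e2 e3 e4 : ℕ,
      α^n = e0 + e1*α + e2*α^2 + e3*α^3 + e4*α^4 := by
  induction n using Nat.strong_induction_on with
  | _ n ih =>
  obtain _|_|_|_|_|m := n
  · exact ⟨1,0,0,0,0, by push_cast; ring⟩
  · exact ⟨0,1,0,0,0, by push_cast; ring⟩
  · exact ⟨0,0,1,0,0, by push_cast; ring⟩
  · exact ⟨0,0,0,1,0, by push_cast; ring⟩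
  · exact ⟨0,0,0,0,1, by push_cast; ring⟩
  · obtain ⟨a0,a1,a2,a3,a4,ha⟩ := ih m (by omega)
    obtain ⟨b0,b1,b2,b3,b4,hb⟩ := ih (m+2) (by omega)
    obtain ⟨c0,c1,c2,c3,c4,hc⟩ := ih (m+3) (by omega)
    have key : α^(m+5) = ((p:ℝ)-1)*α^(m+3) + ((p:ℝ)-2)*α^(m+2) + 4*(p:ℝ)*α^m := by
      linear_combination (α^m * (α^2 - α + 2)) * hroot
    refine ⟨(p-1)*c0 + (p-2)*b0 + 4*p*a0, (p-1)*c1 + (p-2)*b1 + 4*p*a1,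
            (p-1)*c2 + (p-2)*b2 + 4*p*a2, (p-1)*c3 + (p-2)*b3 + 4*p*a3,
            (p-1)*c4 + (p-2)*b4 + 4*p*a4, ?_⟩
    have d1 : ((p-1:ℕ):ℝ) = (p:ℝ)-1 := by
      rw [Nat.cast_sub (by omega)]; norm_num
    have d2 : ((p-2:ℕ):ℝ) = (p:ℝ)-2 := by
      rw [Nat.cast_sub (by omega)]; norm_num
    rw [key, ha, hb, hc]
    push_cast [d1, d2]
    ring

lemma mem_hasRep (p : ℕ) (hp5 : 5 ≤ p) (α : ℝ)
    (hroot : α ^ 3 + α ^ 2 - ↑p * α - 2 * ↑p = 0) (x : ℝ) (hx : x ∈ Nmon α) :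
    ∃ e0 e1 e2 e3 e4 : ℕ,
      x = e0 + e1*α + e2*α^2 + e3*α^3 + e4*α^4 := by
  obtain ⟨f, rfl⟩ := hx
  rw [evalN, Polynomial.eval₂_eq_sum, Polynomial.sum]
  refine Finset.sum_induction _ (fun y => ∃ e0 e1 e2 e3 e4 : ℕ,
      y = e0 + e1*α + e2*α^2 + e3*α^3 + e4*α^4) ?_ ?_ ?_
  · rintro u v ⟨a0,a1,a2,a3,a4,ha⟩ ⟨b0,b1,b2,b3,b4,hb⟩
    exact ⟨a0+b0, a1+b1, a2+b2, a3+b3, a4+b4, by rw [ha, hb]; push_cast; ring⟩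
  · exact ⟨0,0,0,0,0, by push_cast; ring⟩
  · intro n _
    obtain ⟨a0,a1,a2,a3,a4,ha⟩ := hasRep_pow p hp5 α hroot n
    refine ⟨f.coeff n * a0, f.coeff n * a1, f.coeff n * a2, f.coeff n * a3,
      f.coeff n * a4, ?_⟩
    simp only [Nat.castRingHom, RingHom.coe_mk, MonoidHom.coe_mk, OneHom.coe_mk, eq_natCast]
    rw [ha]; push_cast; ring

lemma unique_rep (p : ℕ) (hp : p.Prime) (hp3 : 3 < p) (α : ℝ)
    (hroot : α ^ 3 + α ^ 2 - ↑p * α - 2 * ↑p = 0) (k : ℕ) (hk : k ≤ 4)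
    (e0 e1 e2 e3 e4 : ℕ)
    (h : α^k = e0 + e1*α + e2*α^2 + e3*α^3 + e4*α^4) :
    e0 = (if k = 0 then 1 else 0) ∧ e1 = (if k = 1 then 1 else 0) ∧
    e2 = (if k = 2 then 1 else 0) ∧ e3 = (if k = 3 then 1 else 0) ∧
    e4 = (if k = 4 then 1 else 0) := by
  have hp' : (3:ℤ) < (p:ℤ) := by exact_mod_cast hp3
  interval_cases k
  · -- k = 0
    obtain ⟨hA, hB, hC⟩ := lin_indep p hp hp3 α hroot
      ((e0:ℤ) + 2*p*e3 - 2*p*e4 - 1) ((e1:ℤ) + p*e3 + p*e4)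
      ((e2:ℤ) - e3 + (p+1)*e4)
      (by push_cast; linear_combination -h - ((e3:ℝ) + (e4:ℝ)*(α-1)) * hroot)
    have hs : (e3:ℤ) + e4 ≤ 1 := by
      by_contra hcon
      push_neg at hcon
      have h2 : (p:ℤ)*2 ≤ (p:ℤ)*((e3:ℤ)+e4) :=
        mul_le_mul_of_nonneg_left hcon (by linarith)
      have h0 : (0:ℤ) ≤ e1 := Int.ofNat_nonneg e1
      nlinarith [hB]
    have hcase : (e3 = 0 ∧ e4 = 0) ∨ (e3 = 1 ∧ e4 = 0) ∨ (e3 = 0 ∧ e4 = 1) := by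
      omega
    rcases hcase with ⟨h3,h4⟩|⟨h3,h4⟩|⟨h3,h4⟩ <;> subst h3 <;> subst h4 <;>
      push_cast at hA hB hC <;> norm_num <;> omega
  · -- k = 1
    obtain ⟨hA, hB, hC⟩ := lin_indep p hp hp3 α hroot
      ((e0:ℤ) + 2*p*e3 - 2*p*e4) ((e1:ℤ) + p*e3 + p*e4 - 1)
      ((e2:ℤ) - e3 + (p+1)*e4)
      (by push_cast; linear_combination -h - ((e3:ℝ) + (e4:ℝ)*(α-1)) * hroot)
    have hs : (e3:ℤ) + e4 ≤ 1 := by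
      by_contra hcon
      push_neg at hcon
      have h2 : (p:ℤ)*2 ≤ (p:ℤ)*((e3:ℤ)+e4) :=
        mul_le_mul_of_nonneg_left hcon (by linarith)
      have h0 : (0:ℤ) ≤ e1 := Int.ofNat_nonneg e1
      nlinarith [hB]
    have hcase : (e3 = 0 ∧ e4 = 0) ∨ (e3 = 1 ∧ e4 = 0) ∨ (e3 = 0 ∧ e4 = 1) := by
      omega
    rcases hcase with ⟨h3,h4⟩|⟨h3,h4⟩|⟨h3,h4⟩ <;> subst h3 <;> subst h4 <;>
      push_cast at hA hB hC <;> norm_num <;> omega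
  · -- k = 2
    obtain ⟨hA, hB, hC⟩ := lin_indep p hp hp3 α hroot
      ((e0:ℤ) + 2*p*e3 - 2*p*e4) ((e1:ℤ) + p*e3 + p*e4)
      ((e2:ℤ) - e3 + (p+1)*e4 - 1)
      (by push_cast; linear_combination -h - ((e3:ℝ) + (e4:ℝ)*(α-1)) * hroot)
    have hs : (e3:ℤ) + e4 ≤ 1 := by
      by_contra hcon
      push_neg at hcon
      have h2 : (p:ℤ)*2 ≤ (p:ℤ)*((e3:ℤ)+e4) :=
        mul_le_mul_of_nonneg_left hcon (by linarith)
      have h0 : (0:ℤ) ≤ e1 := Int.ofNat_nonneg e1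
      nlinarith [hB]
    have hcase : (e3 = 0 ∧ e4 = 0) ∨ (e3 = 1 ∧ e4 = 0) ∨ (e3 = 0 ∧ e4 = 1) := by
      omega
    rcases hcase with ⟨h3,h4⟩|⟨h3,h4⟩|⟨h3,h4⟩ <;> subst h3 <;> subst h4 <;>
      push_cast at hA hB hC <;> norm_num <;> omega
  · -- k = 3
    obtain ⟨hA, hB, hC⟩ := lin_indep p hp hp3 α hroot
      ((e0:ℤ) + 2*p*e3 - 2*p*e4 - 2*p) ((e1:ℤ) + p*e3 + p*e4 - p)
      ((e2:ℤ) - e3 + (p+1)*e4 + 1)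
      (by push_cast; linear_combination -h + (1 - (e3:ℝ) - (e4:ℝ)*(α-1)) * hroot)
    have hs : (e3:ℤ) + e4 ≤ 1 := by
      by_contra hcon
      push_neg at hcon
      have h2 : (p:ℤ)*2 ≤ (p:ℤ)*((e3:ℤ)+e4) :=
        mul_le_mul_of_nonneg_left hcon (by linarith)
      have h0 : (0:ℤ) ≤ e1 := Int.ofNat_nonneg e1
      nlinarith [hB]
    have hcase : (e3 = 0 ∧ e4 = 0) ∨ (e3 = 1 ∧ e4 = 0) ∨ (e3 = 0 ∧ e4 = 1) := by
      omega
    rcases hcase with ⟨h3,h4⟩|⟨h3,h4⟩|⟨h3,h4⟩ <;> subst h3 <;> subst h4 <;>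
      push_cast at hA hB hC <;> norm_num <;> omega
  · -- k = 4
    obtain ⟨hA, hB, hC⟩ := lin_indep p hp hp3 α hroot
      ((e0:ℤ) + 2*p*e3 - 2*p*e4 + 2*p) ((e1:ℤ) + p*e3 + p*e4 - p)
      ((e2:ℤ) - e3 + (p+1)*e4 - (p+1))
      (by push_cast; linear_combination -h + ((α-1)*(1-(e4:ℝ)) - (e3:ℝ)) * hroot)
    have hs : (e3:ℤ) + e4 ≤ 1 := by
      by_contra hcon
      push_neg at hcon
      have h2 : (p:ℤ)*2 ≤ (p:ℤ)*((e3:ℤ)+e4) :=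
        mul_le_mul_of_nonneg_left hcon (by linarith)
      have h0 : (0:ℤ) ≤ e1 := Int.ofNat_nonneg e1
      nlinarith [hB]
    have hcase : (e3 = 0 ∧ e4 = 0) ∨ (e3 = 1 ∧ e4 = 0) ∨ (e3 = 0 ∧ e4 = 1) := by
      omega
    rcases hcase with ⟨h3,h4⟩|⟨h3,h4⟩|⟨h3,h4⟩ <;> subst h3 <;> subst h4 <;>
      push_cast at hA hB hC <;> norm_num <;> omega

lemma rep_mem (α : ℝ) (e0 e1 e2 e3 e4 : ℕ) :
    ((e0:ℝ) + e1*α + e2*α^2 + e3*α^3 + e4*α^4) ∈ Nmon α := by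
  refine ⟨C e0 + C e1 * X + C e2 * X^2 + C e3 * X^3 + C e4 * X^4, ?_⟩
  simp [evalN, eval₂_add, eval₂_mul, eval₂_C, eval₂_X_pow, eval₂_X, Nat.coe_castRingHom]

lemma mem_pow (α : ℝ) (k : ℕ) : α^k ∈ Nmon α :=
  ⟨X^k, by simp [evalN]⟩

lemma rep_zero {α : ℝ} (hα : 0 < α) (e0 e1 e2 e3 e4 : ℕ)
    (h : (e0:ℝ) + e1*α + e2*α^2 + e3*α^3 + e4*α^4 = 0) :
    e0 = 0 ∧ e1 = 0 ∧ e2 = 0 ∧ e3 = 0 ∧ e4 = 0 := by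
  have t0 : (0:ℝ) ≤ e0 := by positivity
  have t1 : (0:ℝ) ≤ (e1:ℝ)*α := by positivity
  have t2 : (0:ℝ) ≤ (e2:ℝ)*α^2 := by positivity
  have t3 : (0:ℝ) ≤ (e3:ℝ)*α^3 := by positivity
  have t4 : (0:ℝ) ≤ (e4:ℝ)*α^4 := by positivity
  have hne : α ≠ 0 := ne_of_gt hα
  have z0 : (e0:ℝ) = 0 := by linarith
  have z1 : (e1:ℝ)*α = 0 := by linarith
  have z2 : (e2:ℝ)*α^2 = 0 := by linarith
  have z3 : (e3:ℝ)*α^3 = 0 := by linarith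
  have z4 : (e4:ℝ)*α^4 = 0 := by linarith
  refine ⟨by exact_mod_cast z0, ?_, ?_, ?_, ?_⟩
  · have := (mul_eq_zero.1 z1).resolve_right hne
    exact_mod_cast this
  · have := (mul_eq_zero.1 z2).resolve_right (pow_ne_zero 2 hne)
    exact_mod_cast this
  · have := (mul_eq_zero.1 z3).resolve_right (pow_ne_zero 3 hne)
    exact_mod_cast this
  · have := (mul_eq_zero.1 z4).resolve_right (pow_ne_zero 4 hne)
    exact_mod_cast this

/-- for a prime p > 3 and α the unique positive root of
X³ + X² - pX - 2p, the monoid ℕ₀[α] is atomic with exactly five atoms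
1, α, α², α³, α⁴. -/
theorem stmt13 (p : ℕ) (hp : p.Prime) (hp3 : 3 < p) (α : ℝ) (hα : 0 < α)
    (hroot : α ^ 3 + α ^ 2 - p * α - 2 * p = 0)
    (huniq : ∀ x : ℝ, 0 < x → x ^ 3 + x ^ 2 - p * x - 2 * p = 0 → x = α) :
    AtomicM α ∧
    {a : ℝ | IsAtomIn α a} = ({1, α, α ^ 2, α ^ 3, α ^ 4} : Set ℝ) ∧
    Set.ncard {a : ℝ | IsAtomIn α a} = 5 := by
  have hp4 : p ≠ 4 := by rintro rfl; norm_num at hp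
  have hp5 : 5 ≤ p := by omega
  have hp5R : (5:ℝ) ≤ p := by exact_mod_cast hp5
  -- α > 1
  have hα1 : 1 < α := by
    by_contra hcon
    push_neg at hcon
    have h2 : α^2 ≤ 1 := by nlinarith
    have h3 : α^3 ≤ 1 := by nlinarith
    have hpa : 0 < (p:ℝ)*α := by positivity
    nlinarith
  -- each power is an atom
  have atom_pow : ∀ k : ℕ, k ≤ 4 → IsAtomIn α (α^k) := by
    intro k hk
    refine ⟨mem_pow α k, ne_of_gt (pow_pos hα k), ?_⟩
    intro b c hb hc heq
    obtain ⟨b0,b1,b2,b3,b4,hbrep⟩ := mem_hasRep p hp5 α hroot b hb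
    obtain ⟨c0,c1,c2,c3,c4,hcrep⟩ := mem_hasRep p hp5 α hroot c hc
    have hsum : α^k = ((b0+c0 : ℕ):ℝ) + ((b1+c1:ℕ):ℝ)*α + ((b2+c2:ℕ):ℝ)*α^2
        + ((b3+c3:ℕ):ℝ)*α^3 + ((b4+c4:ℕ):ℝ)*α^4 := by
      rw [heq, hbrep, hcrep]; push_cast; ring
    obtain ⟨u0,u1,u2,u3,u4⟩ := unique_rep p hp hp3 α hroot k hk _ _ _ _ _ hsum
    have hzero : (b0=0∧b1=0∧b2=0∧b3=0∧b4=0) ∨ (c0=0∧c1=0∧c2=0∧c3=0∧c4=0) := by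
      interval_cases k <;> (norm_num at u0 u1 u2 u3 u4; omega)
    rcases hzero with ⟨z0,z1,z2,z3,z4⟩|⟨z0,z1,z2,z3,z4⟩
    · left; rw [hbrep, z0, z1, z2, z3, z4]; norm_num
    · right; rw [hcrep, z0, z1, z2, z3, z4]; norm_num
  -- the set of atoms
  have hset : {a : ℝ | IsAtomIn α a} = ({1, α, α ^ 2, α ^ 3, α ^ 4} : Set ℝ) := by
    ext a
    simp only [Set.mem_setOf_eq, Set.mem_insert_iff, Set.mem_singleton_iff]
    constructor
    · intro ha
      obtain ⟨b0,b1,b2,b3,b4,hrep⟩ := mem_hasRep p hp5 α hroot a ha.1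
      have htot : b0+b1+b2+b3+b4 ≠ 0 := by
        rintro h
        obtain ⟨h0,h1,h2,h3,h4⟩ : b0=0∧b1=0∧b2=0∧b3=0∧b4=0 := by omega
        exact ha.2.1 (by rw [hrep, h0, h1, h2, h3, h4]; norm_num)
      rcases Nat.lt_or_ge (b0+b1+b2+b3+b4) 2 with hlt|hge
      · -- total = 1
        have hone : (b0=1∧b1=0∧b2=0∧b3=0∧b4=0) ∨ (b0=0∧b1=1∧b2=0∧b3=0∧b4=0)
          ∨ (b0=0∧b1=0∧b2=1∧b3=0∧b4=0) ∨ (b0=0∧b1=0∧b2=0∧b3=1∧b4=0)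
          ∨ (b0=0∧b1=0∧b2=0∧b3=0∧b4=1) := by omega
        rcases hone with ⟨h0,h1,h2,h3,h4⟩|⟨h0,h1,h2,h3,h4⟩|⟨h0,h1,h2,h3,h4⟩|⟨h0,h1,h2,h3,h4⟩|⟨h0,h1,h2,h3,h4⟩ <;>
          rw [h0, h1, h2, h3, h4] at hrep <;> norm_num at hrep <;> tauto
      · -- total ≥ 2 : contradiction
        exfalso
        have hpick : 1 ≤ b0 ∨ 1 ≤ b1 ∨ 1 ≤ b2 ∨ 1 ≤ b3 ∨ 1 ≤ b4 := by omega
        rcases hpick with h|h|h|h|h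
        · obtain ⟨m, rfl⟩ : ∃ m, b0 = m + 1 := ⟨b0-1, by omega⟩
          rcases ha.2.2 (α^0) ((m:ℝ) + b1*α + b2*α^2 + b3*α^3 + b4*α^4)
            (mem_pow α 0) (rep_mem α m b1 b2 b3 b4)
            (by rw [hrep]; push_cast; ring) with h'|h'
          · exact absurd h' (ne_of_gt (pow_pos hα 0))
          · obtain ⟨z0,z1,z2,z3,z4⟩ := rep_zero hα m b1 b2 b3 b4 h'
            omega
        · obtain ⟨m, rfl⟩ : ∃ m, b1 = m + 1 := ⟨b1-1, by omega⟩
          rcases ha.2.2 (α^1) ((b0:ℝ) + m*α + b2*α^2 + b3*α^3 + b4*α^4)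
            (mem_pow α 1) (rep_mem α b0 m b2 b3 b4)
            (by rw [hrep]; push_cast; ring) with h'|h'
          · exact absurd h' (ne_of_gt (pow_pos hα 1))
          · obtain ⟨z0,z1,z2,z3,z4⟩ := rep_zero hα b0 m b2 b3 b4 h'
            omega
        · obtain ⟨m, rfl⟩ : ∃ m, b2 = m + 1 := ⟨b2-1, by omega⟩
          rcases ha.2.2 (α^2) ((b0:ℝ) + b1*α + m*α^2 + b3*α^3 + b4*α^4)
            (mem_pow α 2) (rep_mem α b0 b1 m b3 b4)
            (by rw [hrep]; push_cast; ring) with h'|h'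
          · exact absurd h' (ne_of_gt (pow_pos hα 2))
          · obtain ⟨z0,z1,z2,z3,z4⟩ := rep_zero hα b0 b1 m b3 b4 h'
            omega
        · obtain ⟨m, rfl⟩ : ∃ m, b3 = m + 1 := ⟨b3-1, by omega⟩
          rcases ha.2.2 (α^3) ((b0:ℝ) + b1*α + b2*α^2 + m*α^3 + b4*α^4)
            (mem_pow α 3) (rep_mem α b0 b1 b2 m b4)
            (by rw [hrep]; push_cast; ring) with h'|h'
          · exact absurd h' (ne_of_gt (pow_pos hα 3))
          · obtain ⟨z0,z1,z2,z3,z4⟩ := rep_zero hα b0 b1 b2 m b4 h'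
            omega
        · obtain ⟨m, rfl⟩ : ∃ m, b4 = m + 1 := ⟨b4-1, by omega⟩
          rcases ha.2.2 (α^4) ((b0:ℝ) + b1*α + b2*α^2 + b3*α^3 + m*α^4)
            (mem_pow α 4) (rep_mem α b0 b1 b2 b3 m)
            (by rw [hrep]; push_cast; ring) with h'|h'
          · exact absurd h' (ne_of_gt (pow_pos hα 4))
          · obtain ⟨z0,z1,z2,z3,z4⟩ := rep_zero hα b0 b1 b2 b3 m h'
            omega
    · rintro (rfl|rfl|rfl|rfl|rfl)
      · simpa using atom_pow 0 (by norm_num)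
      · simpa using atom_pow 1 (by norm_num)
      · exact atom_pow 2 (by norm_num)
      · exact atom_pow 3 (by norm_num)
      · exact atom_pow 4 (by norm_num)
  refine ⟨?_, hset, ?_⟩
  · -- atomicity
    intro x hx hx0
    obtain ⟨e0,e1,e2,e3,e4,hrep⟩ := mem_hasRep p hp5 α hroot x hx
    refine ⟨Multiset.replicate e0 1 + Multiset.replicate e1 α +
      Multiset.replicate e2 (α^2) + Multiset.replicate e3 (α^3) +
      Multiset.replicate e4 (α^4), ?_, ?_⟩
    · intro a ha
      simp only [Multiset.mem_add, Multiset.mem_replicate] at ha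
      have hmem : a = 1 ∨ a = α ∨ a = α^2 ∨ a = α^3 ∨ a = α^4 := by tauto
      rcases hmem with rfl|rfl|rfl|rfl|rfl
      · simpa using atom_pow 0 (by norm_num)
      · simpa using atom_pow 1 (by norm_num)
      · exact atom_pow 2 (by norm_num)
      · exact atom_pow 3 (by norm_num)
      · exact atom_pow 4 (by norm_num)
    · simp only [Multiset.sum_add, Multiset.sum_replicate, nsmul_eq_mul]
      rw [hrep]; ring
  · -- cardinality
    rw [hset]
    have d1 : (1:ℝ) < α := hα1
    have d2 : α < α^2 := by nlinarith
    have d3 : α^2 < α^3 := by nlinarith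
    have d4 : α^3 < α^4 := by nlinarith
    have e12 : (1:ℝ) < α^2 := by nlinarith
    have e13 : (1:ℝ) < α^3 := by nlinarith
    have e14 : (1:ℝ) < α^4 := by nlinarith
    have e23 : α < α^3 := by nlinarith
    have e24 : α < α^4 := by nlinarith
    have e34 : α^2 < α^4 := by nlinarith
    rw [show ({1, α, α^2, α^3, α^4} : Set ℝ) = ↑({1, α, α^2, α^3, α^4} : Finset ℝ) by simp]
    rw [Set.ncard_coe_finset]
    rw [Finset.card_insert_of_notMem (by
      simp only [Finset.mem_insert, Finset.mem_singleton]
      push_neg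
      exact ⟨ne_of_lt d1, ne_of_lt e12, ne_of_lt e13, ne_of_lt e14⟩)]
    rw [Finset.card_insert_of_notMem (by
      simp only [Finset.mem_insert, Finset.mem_singleton]
      push_neg
      exact ⟨ne_of_lt d2, ne_of_lt e23, ne_of_lt e24⟩)]
    rw [Finset.card_insert_of_notMem (by
      simp only [Finset.mem_insert, Finset.mem_singleton]
      push_neg
      exact ⟨ne_of_lt d3, ne_of_lt e34⟩)]
    rw [Finset.card_insert_of_notMem (by
      simp only [Finset.mem_singleton]
      exact ne_of_lt d4)]
    simp
end

section
/- Let a, b, c be positive integers and let α be the unique positive real root of the irreducible cubic X³ - aX² + bX - c, with complex conjugate roots β, β̄. Then max(α, |β|) = α (i.e., α is a weak Perron number) if and only if b³ ≤ a³c. -/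
open Polynomial

set_option maxHeartbeats 2000000 in
/-- for the irreducible cubic X³ - aX² + bX - c with unique positive
root α, α is a weak Perron number if and only if b³ ≤ a³c. -/
theorem stmt14 (a b c : ℤ) (ha : 0 < a) (hb : 0 < b) (hc : 0 < c)
    (α : ℝ) (hα : 0 < α)
    (hmin : minpoly ℚ α =
      X ^ 3 - Polynomial.C (a : ℚ) * X ^ 2 + Polynomial.C (b : ℚ) * X - Polynomial.C (c : ℚ))
    (huniq : ∀ x : ℝ, 0 < x → Polynomial.aeval x (minpoly ℚ α) = 0 → x = α) :
    (∀ β : ℂ, Polynomial.aeval β (minpoly ℚ α) = 0 → ‖β‖ ≤ α) ↔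
      b ^ 3 ≤ a ^ 3 * c := by
  have haR : (0:ℝ) < a := by exact_mod_cast ha
  have hbR : (0:ℝ) < b := by exact_mod_cast hb
  have hcR : (0:ℝ) < c := by exact_mod_cast hc
  -- real root equation
  have hroot : α^3 - a*α^2 + b*α - c = 0 := by
    have h0 := minpoly.aeval ℚ α
    rw [hmin] at h0
    simp only [map_sub, map_add, map_mul, map_pow, aeval_X, aeval_C, eq_ratCast] at h0
    push_cast at h0
    linarith
  obtain ⟨s, hs⟩ : ∃ s : ℝ, s = α - a := ⟨_, rfl⟩
  obtain ⟨t, ht⟩ : ∃ t : ℝ, t = α^2 - a*α + b := ⟨_, rfl⟩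
  have hat : α * t = c := by rw [ht]; linear_combination hroot
  -- the quadratic factor has no real roots
  have hq : ∀ r : ℝ, r^2 + s*r + t ≠ 0 := by
    intro r hr
    rw [hs, ht] at hr
    have hmr : r^3 - a*r^2 + b*r - c = 0 := by
      linear_combination (r - α) * hr + hroot
    have hrpos : 0 < r := by nlinarith [hmr]
    have haev : Polynomial.aeval r (minpoly ℚ α) = 0 := by
      rw [hmin]
      simp only [map_sub, map_add, map_mul, map_pow, aeval_X, aeval_C, eq_ratCast]
      push_cast
      linarith [hmr]
    have hrα : r = α := huniq r hrpos haev
    rw [hrα] at hr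
    have hquad : 3*α^2 - 2*a*α + b = 0 := by linarith [hr]
    -- α satisfies a degree-2 rational polynomial, contradiction with minpoly degree 3
    set g : Polynomial ℚ := Polynomial.C 3 * X^2 - Polynomial.C ((2*a : ℤ) : ℚ) * X
      + Polynomial.C ((b : ℤ) : ℚ) with hg
    have hg0 : g ≠ 0 := by
      intro h
      have h2 : g.coeff 2 = 3 := by
        rw [hg]
        simp only [coeff_add, coeff_sub, coeff_C_mul, coeff_X_pow, coeff_C]
        norm_num
        rw [Polynomial.coeff_X]
        norm_num
      rw [h] at h2
      simp at h2
    have hgval : Polynomial.aeval α g = 0 := by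
      rw [hg]
      simp only [map_sub, map_add, map_mul, map_pow, aeval_X, aeval_C, eq_ratCast]
      push_cast
      linarith [hquad]
    have hdegle := minpoly.degree_le_of_ne_zero ℚ α hg0 hgval
    have hgdeg : g.degree ≤ 2 := by
      rw [hg]
      compute_degree
    have hmdeg : (minpoly ℚ α).degree = 3 := by
      rw [hmin]
      compute_degree!
    rw [hmdeg] at hdegle
    have : (3 : WithBot ℕ) ≤ 2 := le_trans hdegle hgdeg
    norm_num at this
  -- discriminant negative
  have hdisc : 0 < t - s^2/4 := by
    by_contra hcon
    push_neg at hcon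
    have he : (0:ℝ) ≤ s^2/4 - t := by linarith
    apply hq (-s/2 + Real.sqrt (s^2/4 - t))
    have hsq := Real.sq_sqrt he
    nlinarith [hsq]
  have qpos : ∀ x : ℝ, 0 < x^2 + s*x + t := by
    intro x; nlinarith [sq_nonneg (x + s/2), hdisc]
  -- cube root of c
  obtain ⟨u, hu⟩ : ∃ u : ℝ, u = (c:ℝ) ^ ((1:ℝ)/3) := ⟨_, rfl⟩
  have hupos : 0 < u := by rw [hu]; exact Real.rpow_pos_of_pos hcR _
  have hu3 : u^3 = c := by
    rw [hu, ← Real.rpow_natCast ((c:ℝ) ^ ((1:ℝ)/3)) 3, ← Real.rpow_mul hcR.le]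
    norm_num
  have hmu : u^3 - a*u^2 + b*u - c = (u - α) * (u^2 + s*u + t) := by
    rw [hs, ht]; linear_combination hroot
  have keyfwd : (c:ℝ) ≤ α^3 → (b:ℝ)^3 ≤ a^3*c := by
    intro h
    have huα : u ≤ α := by
      by_contra hcon
      push_neg at hcon
      have : α^3 < u^3 := pow_lt_pow_left₀ hcon hα.le (by norm_num)
      rw [hu3] at this; linarith
    have h1 : u^3 - a*u^2 + b*u - c ≤ 0 := by
      rw [hmu]
      nlinarith [qpos u]
    have h2 : u * ((b:ℝ) - a*u) ≤ 0 := by nlinarith [hu3, h1]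
    have h3 : (b:ℝ) ≤ a*u := by nlinarith [hupos]
    have h4 : (b:ℝ)^3 ≤ (a*u)^3 := pow_le_pow_left₀ hbR.le h3 3
    calc (b:ℝ)^3 ≤ (a*u)^3 := h4
      _ = a^3 * u^3 := by ring
      _ = a^3 * c := by rw [hu3]
  have keybwd : (b:ℝ)^3 ≤ a^3*c → (c:ℝ) ≤ α^3 := by
    intro h
    have h3 : (b:ℝ) ≤ a*u := by
      by_contra hcon
      push_neg at hcon
      have h5 : (a*u)^3 < (b:ℝ)^3 := pow_lt_pow_left₀ hcon (by positivity) (by norm_num)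
      have h6 : ((a:ℝ)*u)^3 = a^3*c := by rw [mul_pow, hu3]
      linarith
    have h1 : u^3 - a*u^2 + b*u - c ≤ 0 := by nlinarith [hu3, hupos]
    rw [hmu] at h1
    have huα : u ≤ α := by nlinarith [qpos u]
    calc (c:ℝ) = u^3 := hu3.symm
      _ ≤ α^3 := pow_le_pow_left₀ hupos.le huα 3
  have hsc : (s:ℂ) = (α:ℂ) - a := by rw [hs]; push_cast; ring
  have htc : (t:ℂ) = (α:ℂ)^2 - a*(α:ℂ) + b := by rw [ht]; push_cast; ring
  have hrootc : (α:ℂ)^3 - a*(α:ℂ)^2 + b*(α:ℂ) - c = 0 := by exact_mod_cast hroot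
  constructor
  · -- weak Perron → b^3 ≤ a^3 c
    intro hP
    obtain ⟨w, hw⟩ : ∃ w : ℝ, w = Real.sqrt (t - s^2/4) := ⟨_, rfl⟩
    have hw2 : w^2 = t - s^2/4 := by rw [hw]; exact Real.sq_sqrt hdisc.le
    obtain ⟨β, hβ⟩ : ∃ β : ℂ, β = (↑(-s/2) : ℂ) + (↑w : ℂ) * Complex.I := ⟨_, rfl⟩
    have hw2c : (w:ℂ)^2 = (t:ℂ) - (s:ℂ)^2/4 := by exact_mod_cast hw2
    have hqβ : β^2 + (s:ℂ)*β + (t:ℂ) = 0 := by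
      rw [hβ]
      push_cast
      linear_combination (w:ℂ)^2 * Complex.I_sq - hw2c
    have hcube : β^3 - a*β^2 + b*β - c = 0 := by
      rw [hsc, htc] at hqβ
      linear_combination (β - α) * hqβ + hrootc
    have haev : Polynomial.aeval β (minpoly ℚ α) = 0 := by
      rw [hmin]
      simp only [map_sub, map_add, map_mul, map_pow, aeval_X, aeval_C, eq_ratCast]
      push_cast
      linear_combination hcube
    have habs := hP β haev
    have habs2 : ‖β‖^2 = t := by
      rw [hβ, Complex.sq_norm, Complex.normSq_apply]
      simp only [Complex.add_re, Complex.add_im, Complex.ofReal_re, Complex.ofReal_im,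
        Complex.mul_re, Complex.mul_im, Complex.I_re, Complex.I_im]
      nlinarith [hw2]
    have htα : t ≤ α^2 := by nlinarith [norm_nonneg β, habs, habs2]
    have hcα : (c:ℝ) ≤ α^3 := by nlinarith [hat]
    exact_mod_cast keyfwd hcα
  · -- b^3 ≤ a^3 c → weak Perron
    intro h β haev
    have hR : (b:ℝ)^3 ≤ a^3*c := by exact_mod_cast h
    have hcα := keybwd hR
    have htα : t ≤ α^2 := by nlinarith [hat]
    have hcube : β^3 - a*β^2 + b*β - c = 0 := by
      rw [hmin] at haev
      simp only [map_sub, map_add, map_mul, map_pow, aeval_X, aeval_C, eq_ratCast] at haev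
      push_cast at haev
      linear_combination haev
    have hfac : (β - α) * (β^2 + (s:ℂ)*β + (t:ℂ)) = 0 := by
      rw [hsc, htc]
      linear_combination hcube - hrootc
    rcases mul_eq_zero.mp hfac with h1 | h2
    · have hβα : β = (α:ℂ) := sub_eq_zero.mp h1
      rw [hβα]
      simp [Complex.norm_real, abs_of_pos hα]
    · -- β is a root of the quadratic
      have hre : β.re^2 - β.im^2 + s*β.re + t = 0 := by
        have h3 := congrArg Complex.re h2
        simp [pow_two, Complex.mul_re, Complex.add_re, Complex.mul_im] at h3
        nlinarith [h3]
      have him : β.im * (2*β.re + s) = 0 := by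
        have h3 := congrArg Complex.im h2
        simp [pow_two, Complex.mul_re, Complex.add_im, Complex.mul_im] at h3
        nlinarith [h3]
      rcases mul_eq_zero.mp him with hy0 | hxs
      · exfalso
        apply hq β.re
        rw [hy0] at hre
        linarith [hre]
      · have hx2 : β.re = -s/2 := by linarith
        have habs2 : ‖β‖^2 = t := by
          rw [Complex.sq_norm, Complex.normSq_apply]
          nlinarith [hre, hx2]
        nlinarith [norm_nonneg β, habs2, htα]
end

section
/- Let a, b, c be positive integers. There exists an integer d such that (X³ - aX² + bX - c)(X + d) equals X⁴ minus a polynomial with nonnegative coefficients (a degree-4 negative tail polynomial) if and only if b ≤ a² and b/a ≤ ⌊c/b⌋. -/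
open Polynomial

theorem coeffs_eq (a b c d c0 c1 c2 c3 : ℤ)
    (h : (X ^ 3 - Polynomial.C a * X ^ 2 + Polynomial.C b * X - Polynomial.C c) *
          (X + Polynomial.C d) =
        X ^ 4 - Polynomial.C c3 * X ^ 3 - Polynomial.C c2 * X ^ 2 -
          Polynomial.C c1 * X - Polynomial.C c0) :
    c3 = a - d ∧ c2 = a*d - b ∧ c1 = c - b*d ∧ c0 = c*d := by
  have e : (X ^ 3 - Polynomial.C a * X ^ 2 + Polynomial.C b * X - Polynomial.C c) *
          (X + Polynomial.C d) = X ^ 4 + Polynomial.C (d - a) * X ^ 3 +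
            Polynomial.C (b - a*d) * X ^ 2 + Polynomial.C (b*d - c) * X + Polynomial.C (-(c*d)) := by
    simp only [C_sub, C_mul, C_neg, C_add]
    ring
  rw [e] at h
  have key : ∀ k : ℕ, (X ^ 4 + Polynomial.C (d - a) * X ^ 3 +
            Polynomial.C (b - a*d) * X ^ 2 + Polynomial.C (b*d - c) * X + Polynomial.C (-(c*d))).coeff k =
        (X ^ 4 - Polynomial.C c3 * X ^ 3 - Polynomial.C c2 * X ^ 2 -
          Polynomial.C c1 * X - Polynomial.C c0).coeff k := fun k => by rw [h]
  have h0 := key 0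
  have h1 := key 1
  have h2 := key 2
  have h3 := key 3
  simp only [coeff_add, coeff_sub, coeff_C_mul, coeff_X_pow, coeff_X, coeff_C] at h0 h1 h2 h3
  norm_num at h0 h1 h2 h3
  refine ⟨by linarith, by linarith, by linarith, by linarith⟩

theorem coeffs_eq' (a b c d : ℤ) :
    (X ^ 3 - Polynomial.C a * X ^ 2 + Polynomial.C b * X - Polynomial.C c) *
          (X + Polynomial.C d) =
        X ^ 4 - Polynomial.C (a - d) * X ^ 3 - Polynomial.C (a*d - b) * X ^ 2 -
          Polynomial.C (c - b*d) * X - Polynomial.C (c*d) := by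
  simp only [C_sub, C_mul]
  ring

/-- there is an integer d making (X³ - aX² + bX - c)(X + d) a degree-4
negative tail polynomial if and only if b ≤ a² and b/a ≤ ⌊c/b⌋. -/
theorem stmt17 (a b c : ℤ) (ha : 0 < a) (hb : 0 < b) (hc : 0 < c) :
    (∃ (d c0 c1 c2 c3 : ℤ), 0 ≤ c0 ∧ 0 ≤ c1 ∧ 0 ≤ c2 ∧ 0 ≤ c3 ∧
      (X ^ 3 - Polynomial.C a * X ^ 2 + Polynomial.C b * X - Polynomial.C c) *
          (X + Polynomial.C d) =
        X ^ 4 - Polynomial.C c3 * X ^ 3 - Polynomial.C c2 * X ^ 2 -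
          Polynomial.C c1 * X - Polynomial.C c0) ↔
    (b ≤ a ^ 2 ∧ (b : ℚ) / (a : ℚ) ≤ ((c / b : ℤ) : ℚ)) := by
  have haQ : (0 : ℚ) < (a : ℚ) := by exact_mod_cast ha
  constructor
  · rintro ⟨d, c0, c1, c2, c3, h0, h1, h2, h3, heq⟩
    obtain ⟨e3, e2, e1, e0⟩ := coeffs_eq a b c d c0 c1 c2 c3 heq
    -- inequalities: d ≤ a, b ≤ a*d, b*d ≤ c, 0 ≤ c*d
    have hda : d ≤ a := by omega
    have hbad : b ≤ a * d := by omega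
    have hbdc : b * d ≤ c := by omega
    have hd0 : 0 < d := by nlinarith
    constructor
    · nlinarith
    · have h1 : (b : ℚ) / a ≤ (d : ℚ) := by
        rw [div_le_iff₀ haQ]
        have : (b : ℚ) ≤ (a : ℚ) * d := by exact_mod_cast hbad
        linarith [this]
      have h2 : d ≤ c / b := by
        rw [Int.le_ediv_iff_mul_le hb]
        linarith [mul_comm b d]
      calc (b : ℚ) / a ≤ (d : ℚ) := h1
        _ ≤ ((c / b : ℤ) : ℚ) := by exact_mod_cast h2
  · rintro ⟨hba, hdiv⟩
    set d : ℤ := -((-b) / a) with hd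
    have had : b ≤ a * d := by
      have := Int.ediv_mul_le (-b) (ne_of_gt ha)
      have : (-b) / a * a ≤ -b := this
      rw [hd]; nlinarith [this]
    have hdle : ∀ n : ℤ, b ≤ a * n → d ≤ n := by
      intro n hn
      rw [hd, neg_le]
      rw [Int.le_ediv_iff_mul_le ha]
      nlinarith
    have hda : d ≤ a := hdle a (by nlinarith)
    have hbcb : b ≤ a * (c / b) := by
      have : (b : ℚ) ≤ (a : ℚ) * ((c / b : ℤ) : ℚ) := by
        rw [div_le_iff₀ haQ] at hdiv
        linarith [hdiv]
      exact_mod_cast this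
    have hdcb : d ≤ c / b := hdle _ hbcb
    have hbd : b * d ≤ c := by
      have := (Int.le_ediv_iff_mul_le hb).mp hdcb
      linarith [mul_comm d b]
    have hd0 : 0 < d := by nlinarith
    refine ⟨d, c*d, c - b*d, a*d - b, a - d, by positivity, by linarith, by linarith,
      by linarith, coeffs_eq' a b c d⟩
end

section
/- Let α be the unique positive root of the irreducible cubic 𝔪(X) = X³ - aX² + bX - c with a, b, c positive integers, and suppose ℕ₀[α] is atomic. Then ℕ₀[α] is a proper length-factorial monoid if and only if b ≤ a² and b/a ≤ ⌊c/b⌋. -/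
open Polynomial

/-! ### Auxiliary lemmas -/

lemma evalN_add (α : ℝ) (f g : Polynomial ℕ) : evalN α (f + g) = evalN α f + evalN α g := by
  simp [evalN]

lemma evalN_monomial (α : ℝ) (n k : ℕ) : evalN α (monomial n k) = (k : ℝ) * α ^ n := by
  simp [evalN, eval₂_monomial]

lemma evalN_eq_sum (α : ℝ) (f : Polynomial ℕ) :
    evalN α f = ∑ i ∈ f.support, (f.coeff i : ℝ) * α ^ i := by
  rw [evalN, eval₂_eq_sum, Polynomial.sum]
  simp

lemma evalN_pos (α : ℝ) (hα : 0 < α) (f : Polynomial ℕ) (hf : f ≠ 0) : 0 < evalN α f := by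
  rw [evalN_eq_sum]
  apply Finset.sum_pos'
  · intro i _; positivity
  · refine ⟨f.natDegree, Polynomial.natDegree_mem_support_of_nonzero hf, ?_⟩
    have h : f.coeff f.natDegree ≠ 0 := Polynomial.leadingCoeff_ne_zero.mpr hf
    positivity

lemma mem_Nmon (α : ℝ) (x : ℝ) : x ∈ Nmon α ↔ ∃ f : Polynomial ℕ, evalN α f = x :=
  Iff.rfl

lemma pow_mem_Nmon (α : ℝ) (n : ℕ) : α ^ n ∈ Nmon α :=
  ⟨monomial n 1, by rw [evalN_monomial]; simp⟩

lemma nat_mul_pow_mem_Nmon (α : ℝ) (k n : ℕ) : (k : ℝ) * α ^ n ∈ Nmon α :=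
  ⟨monomial n k, by rw [evalN_monomial]⟩

lemma minpoly_degree3 (a b c : ℤ) (α : ℝ)
    (hmin : minpoly ℚ α =
      X ^ 3 - Polynomial.C (a : ℚ) * X ^ 2 + Polynomial.C (b : ℚ) * X - Polynomial.C (c : ℚ)) :
    (minpoly ℚ α).degree = 3 := by
  rw [hmin]; compute_degree!

lemma alpha_integral (a b c : ℤ) (α : ℝ)
    (hmin : minpoly ℚ α =
      X ^ 3 - Polynomial.C (a : ℚ) * X ^ 2 + Polynomial.C (b : ℚ) * X - Polynomial.C (c : ℚ)) :
    IsIntegral ℚ α := by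
  by_contra hni
  have h0 := minpoly.eq_zero hni
  rw [hmin] at h0
  have hd : (X ^ 3 - Polynomial.C (a : ℚ) * X ^ 2 + Polynomial.C (b : ℚ) * X -
      Polynomial.C (c : ℚ)).degree = 3 := by compute_degree!
  rw [h0] at hd
  simp at hd

lemma cubic_rel (a b c : ℤ) (α : ℝ)
    (hmin : minpoly ℚ α =
      X ^ 3 - Polynomial.C (a : ℚ) * X ^ 2 + Polynomial.C (b : ℚ) * X - Polynomial.C (c : ℚ)) :
    α ^ 3 - (a : ℝ) * α ^ 2 + (b : ℝ) * α - (c : ℝ) = 0 := by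
  have h := minpoly.aeval ℚ α
  rw [hmin] at h
  simpa using h

lemma lin_indep_s18 (a b c : ℤ) (α : ℝ)
    (hmin : minpoly ℚ α =
      X ^ 3 - Polynomial.C (a : ℚ) * X ^ 2 + Polynomial.C (b : ℚ) * X - Polynomial.C (c : ℚ))
    (u v w : ℤ)
    (h : (u : ℝ) + (v : ℝ) * α + (w : ℝ) * α ^ 2 = 0) : u = 0 ∧ v = 0 ∧ w = 0 := by
  set Q : Polynomial ℚ := Polynomial.C (u : ℚ) + Polynomial.C (v : ℚ) * X +
    Polynomial.C (w : ℚ) * X ^ 2 with hQ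
  have haev : Polynomial.aeval α Q = 0 := by
    simp only [hQ, map_add, map_mul, Polynomial.aeval_C, Polynomial.aeval_X, map_pow,
      map_intCast]
    push_cast
    linear_combination h
  have hdvd : minpoly ℚ α ∣ Q := minpoly.dvd ℚ α haev
  have hQ0 : Q = 0 := by
    by_contra hne
    have hd : (minpoly ℚ α).degree ≤ Q.degree := Polynomial.degree_le_of_dvd hdvd hne
    rw [minpoly_degree3 a b c α hmin] at hd
    have h2 : Q.degree ≤ 2 := by rw [hQ]; compute_degree
    have := le_trans hd h2
    norm_num at this
  have e0 := congrArg (fun p => Polynomial.coeff p 0) hQ0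
  have e1 := congrArg (fun p => Polynomial.coeff p 1) hQ0
  have e2 := congrArg (fun p => Polynomial.coeff p 2) hQ0
  simp only [hQ, Polynomial.coeff_add, Polynomial.coeff_C_mul, Polynomial.coeff_C,
    Polynomial.coeff_X, Polynomial.coeff_X_pow, Polynomial.coeff_zero] at e0 e1 e2
  norm_num at e0 e1 e2
  exact ⟨by exact_mod_cast e0, by exact_mod_cast e1, by exact_mod_cast e2⟩

lemma m1_ne (a b c : ℤ) (α : ℝ)
    (hmin : minpoly ℚ α =
      X ^ 3 - Polynomial.C (a : ℚ) * X ^ 2 + Polynomial.C (b : ℚ) * X - Polynomial.C (c : ℚ)) :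
    1 - a + b - c ≠ 0 := by
  intro h0
  have hint := alpha_integral a b c α hmin
  have hirr : Irreducible (minpoly ℚ α) := minpoly.irreducible hint
  have hroot : (minpoly ℚ α).IsRoot 1 := by
    rw [hmin]
    simp only [IsRoot, eval_sub, eval_add, eval_mul, eval_pow, eval_X, eval_C, one_pow]
    have : ((1 - a + b - c : ℤ) : ℚ) = 0 := by exact_mod_cast h0
    push_cast at this ⊢
    linarith
  obtain ⟨q, hq⟩ := Polynomial.dvd_iff_isRoot.mpr hroot
  rcases hirr.isUnit_or_isUnit hq with hu | hu
  · exact Polynomial.not_isUnit_X_sub_C (1 : ℚ) hu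
  · have hdq : q.degree = 0 := Polynomial.degree_eq_zero_of_isUnit hu
    have hd3 : (minpoly ℚ α).degree = 3 := minpoly_degree3 a b c α hmin
    rw [hq, Polynomial.degree_mul, hdq, Polynomial.degree_X_sub_C] at hd3
    norm_num at hd3

lemma alpha_ne_one (a b c : ℤ) (α : ℝ)
    (hmin : minpoly ℚ α =
      X ^ 3 - Polynomial.C (a : ℚ) * X ^ 2 + Polynomial.C (b : ℚ) * X - Polynomial.C (c : ℚ)) :
    α ≠ 1 := by
  intro h1
  have h := cubic_rel a b c α hmin
  rw [h1] at h
  norm_num at h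
  have h2 : 1 - a + b - c = 0 := by
    have : ((1 - a + b - c : ℤ) : ℝ) = 0 := by push_cast; linarith
    exact_mod_cast this
  exact m1_ne a b c α hmin h2

lemma rep_unique (a b c : ℤ) (α : ℝ)
    (hmin : minpoly ℚ α =
      X ^ 3 - Polynomial.C (a : ℚ) * X ^ 2 + Polynomial.C (b : ℚ) * X - Polynomial.C (c : ℚ))
    (x0 x1 x2 x3 y0 y1 y2 y3 : ℤ)
    (h : (x0 : ℝ) + (x1 : ℝ) * α + (x2 : ℝ) * α ^ 2 + (x3 : ℝ) * α ^ 3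
       = (y0 : ℝ) + (y1 : ℝ) * α + (y2 : ℝ) * α ^ 2 + (y3 : ℝ) * α ^ 3) :
    ∃ t : ℤ, x0 - y0 = -(c * t) ∧ x1 - y1 = b * t ∧ x2 - y2 = -(a * t) ∧ x3 - y3 = t := by
  have hcr := cubic_rel a b c α hmin
  have key := lin_indep_s18 a b c α hmin ((x0 - y0) + c * (x3 - y3)) ((x1 - y1) - b * (x3 - y3))
    ((x2 - y2) + a * (x3 - y3)) (by push_cast; linear_combination h - ((x3:ℝ) - y3) * hcr)
  exact ⟨x3 - y3, by omega, by omega, by omega, by omega⟩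

lemma atom_is_pow (α : ℝ) (hα : 0 < α) (x : ℝ) (hx : IsAtomIn α x) : ∃ n : ℕ, x = α ^ n := by
  obtain ⟨⟨f, hf⟩, hx0, hsplit⟩ := hx
  have hfne : f ≠ 0 := by rintro rfl; exact hx0 (by simp [← hf, evalN])
  by_cases he : f.eraseLead = 0
  · have hfm : f = monomial f.natDegree f.leadingCoeff := by
      conv_lhs => rw [← Polynomial.eraseLead_add_monomial_natDegree_leadingCoeff f]
      rw [he, zero_add]
    have hlc : f.leadingCoeff ≠ 0 := Polynomial.leadingCoeff_ne_zero.mpr hfne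
    rcases Nat.lt_or_ge f.leadingCoeff 2 with hk | hk
    · have : f.leadingCoeff = 1 := by omega
      refine ⟨f.natDegree, ?_⟩
      rw [← hf, hfm, this, evalN_monomial]; simp
    · exfalso
      have h1 : evalN α (monomial f.natDegree 1) ≠ 0 :=
        ne_of_gt (evalN_pos α hα _ (by simp))
      have h2 : evalN α (monomial f.natDegree (f.leadingCoeff - 1)) ≠ 0 :=
        ne_of_gt (evalN_pos α hα _ (by simp [Polynomial.monomial_eq_zero_iff]; omega))
      have heq' : evalN α f = evalN α (monomial f.natDegree 1) +
          evalN α (monomial f.natDegree (f.leadingCoeff - 1)) := by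
        conv_lhs => rw [hfm]
        rw [evalN_monomial, evalN_monomial, evalN_monomial]
        have : ((f.leadingCoeff - 1 : ℕ) : ℝ) = (f.leadingCoeff : ℝ) - 1 := by
          push_cast [Nat.cast_sub (by omega : 1 ≤ f.leadingCoeff)]; ring
        rw [this]; ring
      rw [← hf] at *
      rcases hsplit _ _ ⟨monomial f.natDegree 1, rfl⟩
        ⟨monomial f.natDegree (f.leadingCoeff - 1), rfl⟩ heq' with h | h
      · exact h1 h
      · exact h2 h
  · exfalso
    have h1 : evalN α f.eraseLead ≠ 0 := ne_of_gt (evalN_pos α hα _ he)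
    have h2 : evalN α (monomial f.natDegree f.leadingCoeff) ≠ 0 :=
      ne_of_gt (evalN_pos α hα _ (by
        simp [Polynomial.monomial_eq_zero_iff, Polynomial.leadingCoeff_ne_zero.mpr hfne]))
    have heq' : evalN α f = evalN α f.eraseLead +
        evalN α (monomial f.natDegree f.leadingCoeff) := by
      conv_lhs => rw [← Polynomial.eraseLead_add_monomial_natDegree_leadingCoeff f]
      rw [evalN_add]
    rw [← hf] at *
    rcases hsplit _ _ ⟨f.eraseLead, rfl⟩ ⟨monomial f.natDegree f.leadingCoeff, rfl⟩ heq'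
      with h | h
    · exact h1 h
    · exact h2 h

lemma atom_pow_down (α : ℝ) (hα : 0 < α) (n : ℕ) (h : IsAtomIn α (α ^ (n + 1))) :
    IsAtomIn α (α ^ n) := by
  refine ⟨pow_mem_Nmon α n, ne_of_gt (pow_pos hα n), ?_⟩
  rintro u v ⟨f, rfl⟩ ⟨g, rfl⟩ heq
  by_contra hcon
  push_neg at hcon
  obtain ⟨hu, hv⟩ := hcon
  have h1 : α ^ (n + 1) = evalN α (X * f) + evalN α (X * g) := by
    have hf : evalN α (X * f) = α * evalN α f := by simp [evalN, eval₂_mul]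
    have hg : evalN α (X * g) = α * evalN α g := by simp [evalN, eval₂_mul]
    rw [hf, hg, pow_succ, heq]; ring
  rcases h.2.2 _ _ ⟨X * f, rfl⟩ ⟨X * g, rfl⟩ h1 with h' | h'
  · have hf : evalN α (X * f) = α * evalN α f := by simp [evalN, eval₂_mul]
    rw [hf] at h'
    exact hu (by rcases mul_eq_zero.mp h' with h'' | h'' <;>
      first | exact absurd h'' (ne_of_gt hα) | exact h'')
  · have hg : evalN α (X * g) = α * evalN α g := by simp [evalN, eval₂_mul]
    rw [hg] at h'
    exact hv (by rcases mul_eq_zero.mp h' with h'' | h'' <;>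
      first | exact absurd h'' (ne_of_gt hα) | exact h'')

lemma atom_pow_down_many (α : ℝ) (hα : 0 < α) (k n : ℕ)
    (h : IsAtomIn α (α ^ (n + k))) : IsAtomIn α (α ^ n) := by
  induction k with
  | zero => simpa using h
  | succ j ih =>
      exact ih (atom_pow_down α hα (n + j)
        (by rw [show n + j + 1 = n + (j + 1) by ring]; exact h))

lemma pow_inj_exp (α : ℝ) (hα : 0 < α) (hne : α ≠ 1) {i j : ℕ} (h : α ^ i = α ^ j) : i = j := by
  have hlog : Real.log α ≠ 0 := by
    intro h0
    exact hne (by rw [← Real.exp_log hα, h0, Real.exp_zero])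
  have h2 : (i : ℝ) * Real.log α = (j : ℝ) * Real.log α := by
    rw [← Real.log_pow, ← Real.log_pow, h]
  exact_mod_cast mul_right_cancel₀ hlog h2

lemma counts_lemma (v0 v1 v2 v3 : ℝ) (h01 : v0 ≠ v1) (h02 : v0 ≠ v2) (h03 : v0 ≠ v3)
    (h12 : v1 ≠ v2) (h13 : v1 ≠ v3) (h23 : v2 ≠ v3)
    (s : Multiset ℝ) (hs : ∀ x ∈ s, x = v0 ∨ x = v1 ∨ x = v2 ∨ x = v3) :
    s.sum = (s.count v0 : ℝ) * v0 + (s.count v1 : ℝ) * v1 + (s.count v2 : ℝ) * v2 +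
      (s.count v3 : ℝ) * v3 ∧
    Multiset.card s = s.count v0 + s.count v1 + s.count v2 + s.count v3 := by
  induction s using Multiset.induction_on with
  | empty => simp
  | cons a s ih =>
    have ha := hs a (Multiset.mem_cons_self a s)
    obtain ⟨ih1, ih2⟩ := ih (fun x hx => hs x (Multiset.mem_cons_of_mem hx))
    rcases ha with rfl | rfl | rfl | rfl <;>
      constructor <;>
        simp [Multiset.count_cons, Multiset.sum_cons, ih1, ih2,
          h01, h02, h03, h12, h13, h23, h01.symm, h02.symm, h03.symm, h12.symm, h13.symm,
          h23.symm] <;>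
        push_cast <;> ring
-- appended lemmas + theorem (forward only for now)
lemma toNat_cast_real (z : ℤ) (h : 0 ≤ z) : ((z.toNat : ℕ) : ℝ) = (z : ℝ) := by
  exact_mod_cast congrArg (Int.cast : ℤ → ℝ) (Int.toNat_of_nonneg h)

lemma atoms_in_four (α : ℝ) (hα : 0 < α) (hnot4 : ¬ IsAtomIn α (α ^ 4)) (x : ℝ)
    (hx : IsAtomIn α x) : x = α ^ 0 ∨ x = α ^ 1 ∨ x = α ^ 2 ∨ x = α ^ 3 := by
  obtain ⟨n, rfl⟩ := atom_is_pow α hα x hx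
  have hn : n ≤ 3 := by
    by_contra hgt
    push_neg at hgt
    exact hnot4 (atom_pow_down_many α hα (n - 4) 4
      (by rw [show 4 + (n - 4) = n by omega]; exact hx))
  interval_cases n
  · exact Or.inl rfl
  · exact Or.inr (Or.inl rfl)
  · exact Or.inr (Or.inr (Or.inl rfl))
  · exact Or.inr (Or.inr (Or.inr rfl))

set_option maxHeartbeats 1000000 in
/-- for α the unique positive root of the irreducible cubic
X³ - aX² + bX - c with ℕ₀[α] atomic, ℕ₀[α] is a proper LFM iff b ≤ a² and b/a ≤ ⌊c/b⌋. -/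
theorem stmt18 (a b c : ℤ) (ha : 0 < a) (hb : 0 < b) (hc : 0 < c)
    (α : ℝ) (hα : 0 < α)
    (hmin : minpoly ℚ α =
      X ^ 3 - Polynomial.C (a : ℚ) * X ^ 2 + Polynomial.C (b : ℚ) * X - Polynomial.C (c : ℚ))
    (huniq : ∀ x : ℝ, 0 < x → Polynomial.aeval x (minpoly ℚ α) = 0 → x = α)
    (hatomic : AtomicM α) :
    (IsLFM α ∧ ¬ IsUFM α) ↔
      (b ≤ a ^ 2 ∧ (b : ℚ) / (a : ℚ) ≤ ((c / b : ℤ) : ℚ)) := by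
  have hcr := cubic_rel a b c α hmin
  have hm1 := m1_ne a b c α hmin
  have hne1 := alpha_ne_one a b c α hmin
  have hdne : ∀ i j : ℕ, i ≠ j → α ^ i ≠ α ^ j := fun i j hij h => hij (pow_inj_exp α hα hne1 h)
  constructor
  · rintro ⟨hlfm, -⟩
    -- Step 1: α^4 is not an atom (else LFM fails via the relation m(X)(X-1)).
    have hA4 : ¬ IsAtomIn α (α ^ 4) := by
      intro h4
      have hA : ∀ k, k ≤ 4 → IsAtomIn α (α ^ k) := fun k hk =>
        atom_pow_down_many α hα (4 - k) k (by rw [show k + (4 - k) = 4 by omega]; exact h4)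
      set s4 : Multiset ℝ := (α ^ 4) ::ₘ (Multiset.replicate (a + b).toNat (α ^ 2) +
        Multiset.replicate c.toNat (α ^ 0)) with hs4def
      set t4 : Multiset ℝ := Multiset.replicate (a + 1).toNat (α ^ 3) +
        Multiset.replicate (b + c).toNat (α ^ 1) with ht4def
      have hs4atoms : ∀ x ∈ s4, IsAtomIn α x := by
        intro x hx
        rw [hs4def] at hx
        simp only [Multiset.mem_cons, Multiset.mem_add, Multiset.mem_replicate] at hx
        rcases hx with rfl | ⟨-, rfl⟩ | ⟨-, rfl⟩
        exacts [hA 4 le_rfl, hA 2 (by norm_num), hA 0 (by norm_num)]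
      have ht4atoms : ∀ x ∈ t4, IsAtomIn α x := by
        intro x hx
        rw [ht4def] at hx
        simp only [Multiset.mem_add, Multiset.mem_replicate] at hx
        rcases hx with ⟨-, rfl⟩ | ⟨-, rfl⟩
        exacts [hA 3 (by norm_num), hA 1 (by norm_num)]
      have hsum4 : s4.sum = t4.sum := by
        rw [hs4def, ht4def]
        rw [Multiset.sum_cons, Multiset.sum_add, Multiset.sum_replicate,
          Multiset.sum_replicate, Multiset.sum_add, Multiset.sum_replicate,
          Multiset.sum_replicate]
        simp only [nsmul_eq_mul]
        rw [toNat_cast_real _ (by omega), toNat_cast_real _ (by omega),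
          toNat_cast_real _ (by omega), toNat_cast_real _ (by omega)]
        push_cast
        linear_combination (α - 1) * hcr
      have hcard4 : Multiset.card s4 = Multiset.card t4 := by
        rw [hs4def, ht4def]
        simp only [Multiset.card_cons, Multiset.card_add, Multiset.card_replicate]
        omega
      have heqst := hlfm s4 t4 hs4atoms ht4atoms hsum4 hcard4
      have hcount := congrArg (Multiset.count (α ^ 4)) heqst
      have hzero1 : Multiset.count (α ^ 4) (Multiset.replicate (a + b).toNat (α ^ 2) +
          Multiset.replicate c.toNat (α ^ 0)) = 0 := by
        rw [Multiset.count_add, Multiset.count_replicate, Multiset.count_replicate,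
          if_neg (hdne 2 4 (by norm_num)), if_neg (hdne 0 4 (by norm_num))]
      have hzero2 : Multiset.count (α ^ 4) t4 = 0 := by
        rw [ht4def, Multiset.count_add, Multiset.count_replicate, Multiset.count_replicate,
          if_neg (hdne 3 4 (by norm_num)), if_neg (hdne 1 4 (by norm_num))]
      rw [hs4def, Multiset.count_cons_self, hzero1, hzero2] at hcount
      omega
    -- Step 2: atomic factorization of α^4 gives the degree-≤3 representation.
    obtain ⟨s, hsat, hssum⟩ := hatomic (α ^ 4) (pow_mem_Nmon α 4) (ne_of_gt (pow_pos hα 4))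
    have hsfour : ∀ x ∈ s, x = α ^ 0 ∨ x = α ^ 1 ∨ x = α ^ 2 ∨ x = α ^ 3 :=
      fun x hx => atoms_in_four α hα hA4 x (hsat x hx)
    obtain ⟨hsum2, -⟩ := counts_lemma (α ^ 0) (α ^ 1) (α ^ 2) (α ^ 3)
      (hdne 0 1 (by norm_num)) (hdne 0 2 (by norm_num)) (hdne 0 3 (by norm_num))
      (hdne 1 2 (by norm_num)) (hdne 1 3 (by norm_num)) (hdne 2 3 (by norm_num)) s hsfour
    rw [hssum] at hsum2
    set n0 := s.count (α ^ 0) with hn0def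
    set n1 := s.count (α ^ 1) with hn1def
    set n2 := s.count (α ^ 2) with hn2def
    set n3 := s.count (α ^ 3) with hn3def
    have key := lin_indep_s18 a b c α hmin ((n0 : ℤ) + c * ((n3 : ℤ) - a))
      ((n1 : ℤ) - c - b * ((n3 : ℤ) - a)) ((n2 : ℤ) + b + a * ((n3 : ℤ) - a))
      (by push_cast; linear_combination (-1 : ℝ) * hsum2 + ((a : ℝ) - (n3 : ℝ) + α) * hcr)
    obtain ⟨k0, k1, k2⟩ := key
    have hn0' : (0 : ℤ) ≤ (n0 : ℤ) := Int.natCast_nonneg n0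
    have hn1' : (0 : ℤ) ≤ (n1 : ℤ) := Int.natCast_nonneg n1
    have hn2' : (0 : ℤ) ≤ (n2 : ℤ) := Int.natCast_nonneg n2
    have hn3' : (0 : ℤ) ≤ (n3 : ℤ) := Int.natCast_nonneg n3
    have k2' : a * (a - (n3 : ℤ)) = (n2 : ℤ) + b := by linear_combination -k2
    have k1' : b * (a - (n3 : ℤ)) = c - (n1 : ℤ) := by linear_combination k1
    have k0' : c * (a - (n3 : ℤ)) = (n0 : ℤ) := by linear_combination -k0
    have hda : a - (n3 : ℤ) ≤ a := by omega
    have hd0 : 0 ≤ a - (n3 : ℤ) := by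
      by_contra hneg
      push_neg at hneg
      have : c * (a - (n3 : ℤ)) < 0 := mul_neg_of_pos_of_neg hc hneg
      omega
    have hbad : b ≤ a * (a - (n3 : ℤ)) := by rw [k2']; omega
    have hbd : b * (a - (n3 : ℤ)) ≤ c := by rw [k1']; omega
    constructor
    · have hmm : a * (a - (n3 : ℤ)) ≤ a * a := mul_le_mul_of_nonneg_left hda ha.le
      nlinarith [hbad, hmm]
    · have hg1 : (b : ℚ) / (a : ℚ) ≤ ((a - (n3 : ℤ) : ℤ) : ℚ) := by
        rw [div_le_iff₀ (by exact_mod_cast ha : (0 : ℚ) < (a : ℚ))]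
        have : (b : ℤ) ≤ (a - (n3 : ℤ)) * a := by linarith [hbad]
        exact_mod_cast this
      have hg2 : a - (n3 : ℤ) ≤ c / b := (Int.le_ediv_iff_mul_le hb).mpr (by linarith [hbd])
      exact le_trans hg1 (by exact_mod_cast hg2)
  · rintro ⟨h1, h2⟩
    -- Backward direction
    have ha' : (0 : ℚ) < (a : ℚ) := by exact_mod_cast ha
    have hcb1 : 1 ≤ c / b := by
      have hba : (0 : ℚ) < (b : ℚ) / (a : ℚ) := by positivity
      have hpos : (0 : ℚ) < ((c / b : ℤ) : ℚ) := lt_of_lt_of_le hba h2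
      have : (0 : ℤ) < c / b := by exact_mod_cast hpos
      omega
    set d : ℤ := min a (c / b) with hdd
    have hd1 : 1 ≤ d := le_min (by omega) hcb1
    have hda : d ≤ a := min_le_left _ _
    have hdcb : d ≤ c / b := min_le_right _ _
    have hbad : b ≤ a * d := by
      have hx1 : b ≤ a * a := by nlinarith [h1]
      have hx2 : b ≤ a * (c / b) := by
        have hq : (b : ℚ) ≤ ((c / b : ℤ) : ℚ) * (a : ℚ) := (div_le_iff₀ ha').mp h2
        have hz : (b : ℤ) ≤ (c / b) * a := by exact_mod_cast hq
        linarith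
      rcases min_choice a (c / b) with hm | hm <;> rw [hdd, hm]
      exacts [hx1, hx2]
    have hbd : b * d ≤ c := by
      have := (Int.le_ediv_iff_mul_le hb).mp hdcb
      linarith
    set p : ℕ := (a - d).toNat with hpdef
    set q : ℕ := (a * d - b).toNat with hqdef
    set r : ℕ := (c - b * d).toNat with hrdef
    set sc : ℕ := (c * d).toNat with hscdef
    have hp : ((p : ℕ) : ℝ) = (a : ℝ) - (d : ℝ) := by
      rw [hpdef, toNat_cast_real _ (by omega)]; push_cast; ring
    have hq : ((q : ℕ) : ℝ) = (a : ℝ) * (d : ℝ) - (b : ℝ) := by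
      rw [hqdef, toNat_cast_real _ (by omega)]; push_cast; ring
    have hr : ((r : ℕ) : ℝ) = (c : ℝ) - (b : ℝ) * (d : ℝ) := by
      rw [hrdef, toNat_cast_real _ (by omega)]; push_cast; ring
    have hsc : ((sc : ℕ) : ℝ) = (c : ℝ) * (d : ℝ) := by
      rw [hscdef, toNat_cast_real _ (by positivity)]; push_cast; ring
    have hscl : 1 ≤ sc := by
      have hcd : (1 : ℤ) ≤ c * d := by nlinarith
      rw [hscdef]; omega
    have hrel : α ^ 4 = (p : ℝ) * α ^ 3 + (q : ℝ) * α ^ 2 + (r : ℝ) * α + (sc : ℝ) := by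
      rw [hp, hq, hr, hsc]
      linear_combination (α + (d : ℝ)) * hcr
    have hα1 : 1 < α := by
      have h4 : (1 : ℝ) ≤ α ^ 4 := by
        rw [hrel]
        have t1 : (0 : ℝ) ≤ (p : ℝ) * α ^ 3 := by positivity
        have t2 : (0 : ℝ) ≤ (q : ℝ) * α ^ 2 := by positivity
        have t3 : (0 : ℝ) ≤ (r : ℝ) * α := by positivity
        have t4 : (1 : ℝ) ≤ (sc : ℝ) := by exact_mod_cast hscl
        linarith
      by_contra hle
      push_neg at hle
      have hlt : α < 1 := lt_of_le_of_ne hle hne1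
      nlinarith [pow_lt_one₀ hα.le hlt (by norm_num : (4 : ℕ) ≠ 0)]
    -- reduction of powers
    have hpow : ∀ n : ℕ, ∃ y0 y1 y2 y3 : ℕ,
        α ^ n = (y0 : ℝ) * α ^ 0 + (y1 : ℝ) * α ^ 1 + (y2 : ℝ) * α ^ 2 + (y3 : ℝ) * α ^ 3 := by
      intro n
      induction n using Nat.strong_induction_on with
      | _ n ih =>
        match n, ih with
        | 0, _ => exact ⟨1, 0, 0, 0, by norm_num⟩
        | 1, _ => exact ⟨0, 1, 0, 0, by norm_num⟩
        | 2, _ => exact ⟨0, 0, 1, 0, by norm_num⟩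
        | 3, _ => exact ⟨0, 0, 0, 1, by norm_num⟩
        | (m + 4), ih =>
          obtain ⟨u0, u1, u2, u3, hu⟩ := ih (m + 3) (by omega)
          obtain ⟨v0, v1, v2, v3, hv⟩ := ih (m + 2) (by omega)
          obtain ⟨w0, w1, w2, w3, hw⟩ := ih (m + 1) (by omega)
          obtain ⟨z0, z1, z2, z3, hz⟩ := ih m (by omega)
          refine ⟨p * u0 + q * v0 + r * w0 + sc * z0, p * u1 + q * v1 + r * w1 + sc * z1,
            p * u2 + q * v2 + r * w2 + sc * z2, p * u3 + q * v3 + r * w3 + sc * z3, ?_⟩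
          have hstep : α ^ (m + 4) = (p : ℝ) * α ^ (m + 3) + (q : ℝ) * α ^ (m + 2) +
              (r : ℝ) * α ^ (m + 1) + (sc : ℝ) * α ^ m := by
            linear_combination α ^ m * hrel
          rw [hstep, hu, hv, hw, hz]
          push_cast
          ring
    have hred : ∀ x ∈ Nmon α, ∃ x0 x1 x2 x3 : ℕ,
        x = (x0 : ℝ) * α ^ 0 + (x1 : ℝ) * α ^ 1 + (x2 : ℝ) * α ^ 2 + (x3 : ℝ) * α ^ 3 := by
      rintro x ⟨f, rfl⟩
      induction f using Polynomial.induction_on' with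
      | add g h hg hh =>
        obtain ⟨g0, g1, g2, g3, hgr⟩ := hg
        obtain ⟨j0, j1, j2, j3, hjr⟩ := hh
        exact ⟨g0 + j0, g1 + j1, g2 + j2, g3 + j3,
          by rw [evalN_add, hgr, hjr]; push_cast; ring⟩
      | monomial n k =>
        obtain ⟨y0, y1, y2, y3, hy⟩ := hpow n
        exact ⟨k * y0, k * y1, k * y2, k * y3,
          by rw [evalN_monomial, hy]; push_cast; ring⟩
    -- the four small powers are atoms
    have hatomE : ∀ k : ℕ, k ≤ 3 → IsAtomIn α (α ^ k) := by
      intro k hk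
      obtain ⟨e0, e1, e2, e3, hesum, herep⟩ : ∃ e0 e1 e2 e3 : ℕ, e0 + e1 + e2 + e3 = 1 ∧
          α ^ k = (e0 : ℝ) * α ^ 0 + (e1 : ℝ) * α ^ 1 + (e2 : ℝ) * α ^ 2 + (e3 : ℝ) * α ^ 3 := by
        interval_cases k
        · exact ⟨1, 0, 0, 0, rfl, by norm_num⟩
        · exact ⟨0, 1, 0, 0, rfl, by norm_num⟩
        · exact ⟨0, 0, 1, 0, rfl, by norm_num⟩
        · exact ⟨0, 0, 0, 1, rfl, by norm_num⟩
      refine ⟨pow_mem_Nmon α k, ne_of_gt (pow_pos hα k), ?_⟩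
      intro u v hu hv heq
      obtain ⟨x0, x1, x2, x3, hxr⟩ := hred u hu
      obtain ⟨y0, y1, y2, y3, hyr⟩ := hred v hv
      by_contra hcon
      push_neg at hcon
      obtain ⟨hu0, hv0⟩ := hcon
      obtain ⟨t, ht0, ht1, ht2, ht3⟩ := rep_unique a b c α hmin
        ((x0 : ℤ) + y0) ((x1 : ℤ) + y1) ((x2 : ℤ) + y2) ((x3 : ℤ) + y3)
        (e0 : ℤ) (e1 : ℤ) (e2 : ℤ) (e3 : ℤ)
        (by push_cast
            linear_combination (-1 : ℝ) * hxr - hyr - heq + herep)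
      have htz : t = 0 := by
        rcases lt_trichotomy t 0 with htn | htz | htp
        · exfalso
          have hbt1 : b * t ≤ 1 * t := mul_le_mul_of_nonpos_right (by omega) (le_of_lt htn)
          have hx1n : (0 : ℤ) ≤ (x1 : ℤ) + y1 := by positivity
          have hx3n : (0 : ℤ) ≤ (x3 : ℤ) + y3 := by positivity
          have he1 : (e1 : ℤ) ≤ 1 := by exact_mod_cast (by omega : e1 ≤ 1)
          have he3 : (e3 : ℤ) ≤ 1 := by exact_mod_cast (by omega : e3 ≤ 1)
          -- b*t ≥ -1 from ht1; b*t ≤ t ≤ -1 hence t = -1, b*t = -1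
          have hbtm : -1 ≤ b * t := by omega
          have ht1' : t = -1 := by omega
          have hbt : b * t = -1 := by omega
          have he1' : (e1 : ℤ) = 1 ∧ (x1 : ℤ) + y1 = 0 := by omega
          have he3' : (e3 : ℤ) = 1 := by omega
          have : (e1 : ℤ) + e3 ≤ 1 := by exact_mod_cast (by omega : e1 + e3 ≤ 1)
          omega
        · exact htz
        · exfalso
          have hat1 : 1 * t ≤ a * t := mul_le_mul_of_nonneg_right (by omega) (by omega)
          have hct1 : 1 * t ≤ c * t := mul_le_mul_of_nonneg_right (by omega) (by omega)
          have hx2n : (0 : ℤ) ≤ (x2 : ℤ) + y2 := by positivity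
          have hx0n : (0 : ℤ) ≤ (x0 : ℤ) + y0 := by positivity
          have he2 : (e2 : ℤ) ≤ 1 := by exact_mod_cast (by omega : e2 ≤ 1)
          have he0 : (e0 : ℤ) ≤ 1 := by exact_mod_cast (by omega : e0 ≤ 1)
          have he02 : (e0 : ℤ) + e2 ≤ 1 := by exact_mod_cast (by omega : e0 + e2 ≤ 1)
          omega
      rw [htz] at ht0 ht1 ht2 ht3
      simp only [mul_zero, neg_zero, sub_zero] at ht0 ht1 ht2 ht3
      -- componentwise: x + y = e
      have hc0 : x0 + y0 = e0 := by exact_mod_cast (by omega : (x0 : ℤ) + y0 = e0)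
      have hc1 : x1 + y1 = e1 := by exact_mod_cast (by omega : (x1 : ℤ) + y1 = e1)
      have hc2 : x2 + y2 = e2 := by exact_mod_cast (by omega : (x2 : ℤ) + y2 = e2)
      have hc3 : x3 + y3 = e3 := by exact_mod_cast (by omega : (x3 : ℤ) + y3 = e3)
      have hsplit : (x0 = 0 ∧ x1 = 0 ∧ x2 = 0 ∧ x3 = 0) ∨
          (y0 = 0 ∧ y1 = 0 ∧ y2 = 0 ∧ y3 = 0) := by omega
      rcases hsplit with ⟨z0, z1, z2, z3⟩ | ⟨z0, z1, z2, z3⟩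
      · exact hu0 (by rw [hxr, z0, z1, z2, z3]; norm_num)
      · exact hv0 (by rw [hyr, z0, z1, z2, z3]; norm_num)
    -- ¬ UFM
    have hnufm : ¬ IsUFM α := by
      intro huf
      set s1 : Multiset ℝ := Multiset.replicate c.toNat (α ^ 0) +
        Multiset.replicate a.toNat (α ^ 2) with hs1def
      set t1 : Multiset ℝ := (α ^ 3) ::ₘ Multiset.replicate b.toNat (α ^ 1) with ht1def
      have hs1atoms : ∀ x ∈ s1, IsAtomIn α x := by
        intro x hx
        rw [hs1def] at hx
        simp only [Multiset.mem_add, Multiset.mem_replicate] at hx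
        rcases hx with ⟨-, rfl⟩ | ⟨-, rfl⟩
        exacts [hatomE 0 (by norm_num), hatomE 2 (by norm_num)]
      have ht1atoms : ∀ x ∈ t1, IsAtomIn α x := by
        intro x hx
        rw [ht1def] at hx
        simp only [Multiset.mem_cons, Multiset.mem_replicate] at hx
        rcases hx with rfl | ⟨-, rfl⟩
        exacts [hatomE 3 (by norm_num), hatomE 1 (by norm_num)]
      have hsum1 : s1.sum = t1.sum := by
        rw [hs1def, ht1def, Multiset.sum_add, Multiset.sum_replicate, Multiset.sum_replicate,
          Multiset.sum_cons, Multiset.sum_replicate]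
        simp only [nsmul_eq_mul]
        rw [toNat_cast_real _ (by omega), toNat_cast_real _ (by omega),
          toNat_cast_real _ (by omega)]
        linear_combination (-1 : ℝ) * hcr
      have heq1 := huf s1 t1 hs1atoms ht1atoms hsum1
      have hcount := congrArg (Multiset.count (α ^ 3)) heq1
      rw [hs1def, ht1def, Multiset.count_add, Multiset.count_replicate,
        Multiset.count_replicate, Multiset.count_cons_self, Multiset.count_replicate,
        if_neg (hdne 0 3 (by norm_num)), if_neg (hdne 2 3 (by norm_num)),
        if_neg (hdne 1 3 (by norm_num))] at hcount
      omega
    -- LFM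
    have hlfm : IsLFM α := by
      have hA4' : ¬ IsAtomIn α (α ^ 4) := by
        intro h4
        by_cases hz : p = 0 ∧ q = 0 ∧ r = 0
        · obtain ⟨hp0, hq0, hr0⟩ := hz
          have hα4 : α ^ 4 = (sc : ℝ) := by rw [hrel, hp0, hq0, hr0]; norm_num
          have hsc2 : 2 ≤ sc := by
            by_contra hlt
            push_neg at hlt
            have hsc1 : sc = 1 := by omega
            rw [hsc1] at hα4
            norm_num at hα4
            have h2' : (1 : ℝ) < α ^ 2 := by nlinarith
            have h4' : (1 : ℝ) < α ^ 4 := by nlinarith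
            rw [hα4] at h4'
            exact absurd h4' (lt_irrefl 1)
          rcases h4.2.2 (((1 : ℕ) : ℝ) * α ^ 0) (((sc - 1 : ℕ) : ℝ) * α ^ 0)
            (nat_mul_pow_mem_Nmon α 1 0) (nat_mul_pow_mem_Nmon α (sc - 1) 0)
            (by rw [hα4]
                have : ((sc - 1 : ℕ) : ℝ) = (sc : ℝ) - 1 := by
                  push_cast [Nat.cast_sub (by omega : 1 ≤ sc)]; ring
                rw [this]; norm_num) with h' | h'
          · norm_num at h'
          · rw [pow_zero, mul_one] at h'
            have : ((sc - 1 : ℕ) : ℝ) ≠ 0 := by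
              have : (1 : ℕ) ≤ sc - 1 := by omega
              exact_mod_cast (by omega : sc - 1 ≠ 0)
            exact this h'
        · have hor : 1 ≤ p ∨ 1 ≤ q ∨ 1 ≤ r := by
            by_contra hno; push_neg at hno; exact hz ⟨by omega, by omega, by omega⟩
          have humem : ((p : ℝ) * α ^ 3 + (q : ℝ) * α ^ 2 + (r : ℝ) * α ^ 1) ∈ Nmon α :=
            (Nmon α).add_mem ((Nmon α).add_mem (nat_mul_pow_mem_Nmon α p 3)
              (nat_mul_pow_mem_Nmon α q 2)) (nat_mul_pow_mem_Nmon α r 1)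
          have hupos : (0 : ℝ) < (p : ℝ) * α ^ 3 + (q : ℝ) * α ^ 2 + (r : ℝ) * α ^ 1 := by
            have w3 : (0 : ℝ) < α ^ 3 := pow_pos hα 3
            have w2 : (0 : ℝ) < α ^ 2 := pow_pos hα 2
            have w1 : (0 : ℝ) < α ^ 1 := pow_pos hα 1
            have n3 : (0 : ℝ) ≤ (p : ℝ) * α ^ 3 := by positivity
            have n2 : (0 : ℝ) ≤ (q : ℝ) * α ^ 2 := by positivity
            have n1 : (0 : ℝ) ≤ (r : ℝ) * α ^ 1 := by positivity
            rcases hor with hp1 | hq1 | hr1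
            · have : (1 : ℝ) ≤ (p : ℝ) := by exact_mod_cast hp1
              nlinarith
            · have : (1 : ℝ) ≤ (q : ℝ) := by exact_mod_cast hq1
              nlinarith
            · have : (1 : ℝ) ≤ (r : ℝ) := by exact_mod_cast hr1
              nlinarith
          rcases h4.2.2 ((p : ℝ) * α ^ 3 + (q : ℝ) * α ^ 2 + (r : ℝ) * α ^ 1)
            ((sc : ℝ) * α ^ 0) humem (nat_mul_pow_mem_Nmon α sc 0)
            (by rw [hrel]; ring) with h' | h'
          · exact absurd h' (ne_of_gt hupos)
          · rw [pow_zero, mul_one] at h'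
            have : ((sc : ℕ) : ℝ) ≠ 0 := by exact_mod_cast (by omega : sc ≠ 0)
            exact this h'
      intro s t hs ht hsum hcard
      have hsf : ∀ x ∈ s, x = α ^ 0 ∨ x = α ^ 1 ∨ x = α ^ 2 ∨ x = α ^ 3 :=
        fun x hx => atoms_in_four α hα hA4' x (hs x hx)
      have htf : ∀ x ∈ t, x = α ^ 0 ∨ x = α ^ 1 ∨ x = α ^ 2 ∨ x = α ^ 3 :=
        fun x hx => atoms_in_four α hα hA4' x (ht x hx)
      obtain ⟨hssum, hscard⟩ := counts_lemma (α ^ 0) (α ^ 1) (α ^ 2) (α ^ 3)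
        (hdne 0 1 (by norm_num)) (hdne 0 2 (by norm_num)) (hdne 0 3 (by norm_num))
        (hdne 1 2 (by norm_num)) (hdne 1 3 (by norm_num)) (hdne 2 3 (by norm_num)) s hsf
      obtain ⟨htsum, htcard⟩ := counts_lemma (α ^ 0) (α ^ 1) (α ^ 2) (α ^ 3)
        (hdne 0 1 (by norm_num)) (hdne 0 2 (by norm_num)) (hdne 0 3 (by norm_num))
        (hdne 1 2 (by norm_num)) (hdne 1 3 (by norm_num)) (hdne 2 3 (by norm_num)) t htf
      obtain ⟨tt, ht0, ht1, ht2, ht3⟩ := rep_unique a b c α hmin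
        (s.count (α ^ 0) : ℤ) (s.count (α ^ 1) : ℤ) (s.count (α ^ 2) : ℤ) (s.count (α ^ 3) : ℤ)
        (t.count (α ^ 0) : ℤ) (t.count (α ^ 1) : ℤ) (t.count (α ^ 2) : ℤ) (t.count (α ^ 3) : ℤ)
        (by push_cast
            linear_combination (-1 : ℝ) * hssum + hsum + htsum)
      have hdsum : ((s.count (α ^ 0) : ℤ) - t.count (α ^ 0)) +
          ((s.count (α ^ 1) : ℤ) - t.count (α ^ 1)) +
          ((s.count (α ^ 2) : ℤ) - t.count (α ^ 2)) +
          ((s.count (α ^ 3) : ℤ) - t.count (α ^ 3)) = 0 := by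
        have : Multiset.card s = Multiset.card t := hcard
        rw [hscard, htcard] at this
        push_cast [← this]
        omega
      have httz : tt = 0 := by
        have hmul : tt * (1 - a + b - c) = 0 := by
          linear_combination (-1 : ℤ) * ht0 - ht1 - ht2 - ht3 + hdsum
        rcases mul_eq_zero.mp hmul with h' | h'
        · exact h'
        · exact absurd h' hm1
      rw [httz] at ht0 ht1 ht2 ht3
      simp only [mul_zero, neg_zero] at ht0 ht1 ht2 ht3
      have e0 : s.count (α ^ 0) = t.count (α ^ 0) := by omega
      have e1 : s.count (α ^ 1) = t.count (α ^ 1) := by omega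
      have e2 : s.count (α ^ 2) = t.count (α ^ 2) := by omega
      have e3 : s.count (α ^ 3) = t.count (α ^ 3) := by omega
      ext x
      by_cases hxs : x ∈ s
      · rcases hsf x hxs with rfl | rfl | rfl | rfl
        exacts [e0, e1, e2, e3]
      · by_cases hxt : x ∈ t
        · rcases htf x hxt with rfl | rfl | rfl | rfl
          exacts [e0, e1, e2, e3]
        · rw [Multiset.count_eq_zero_of_notMem hxs, Multiset.count_eq_zero_of_notMem hxt]
    exact ⟨hlfm, hnufm⟩
end
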